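/- arXiv:2505.00711 — 6 statements merged into one kernel-verified Lean document; each statement's English description precedes it below -/
import Mathlib

section
/- Let f be square-integrable on (0,1)^d with the uniform probability measure, and suppose the difference quotients D_{z,i}f(v_i,z) = (f(v_{{i}}, z_{-{i}}) - f(z))/(v_i - z_i) are square-integrable. Define C_gas = E[E[(D_z f)(D_z f)^T | z]] with eigendecomposition C_gas = U Λ U^T, eigenvalues λ_1 ≥ ... ≥ λ_d ≥ 0, and global activity scores γ_i(m) = Σ_{j=1}^m λ_j u_{ij}^2. Then the upper Sobol' index satisfies S̄_i ≤ γ_i(d) / (2σ²) for all i = 1,...,d, where σ² = Var(f). -/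
open MeasureTheory Matrix Finset

/-- Global activity score bound for the upper Sobol' index on the unit cube:
`S̄ᵢ ≤ γᵢ(d) / (2σ²)`. -/
theorem stmt_0 {d : ℕ} (f : (Fin d → ℝ) → ℝ)
    (μ : Measure (Fin d → ℝ))
    (hμ : μ = Measure.pi fun _ : Fin d => volume.restrict (Set.Ioo (0:ℝ) 1))
    (hf : MemLp f 2 μ)
    (hD : ∀ i : Fin d, MemLp (fun p : (Fin d → ℝ) × (Fin d → ℝ) =>
      (f (Function.update p.1 i (p.2 i)) - f p.1) / (p.2 i - p.1 i)) 2 (μ.prod μ))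
    (C U : Matrix (Fin d) (Fin d) ℝ) (lam : Fin d → ℝ)
    (hC : ∀ i j, C i j = ∫ z, (∫ v,
      ((f (Function.update z i (v i)) - f z) / (v i - z i)) *
      ((f (Function.update z j (v j)) - f z) / (v j - z j)) ∂μ) ∂μ)
    (hU : Uᵀ * U = 1)
    (hdecomp : C = U * diagonal lam * Uᵀ)
    (hmono : ∀ i j : Fin d, i ≤ j → lam j ≤ lam i)
    (hnonneg : ∀ j, 0 ≤ lam j)
    (σ2 : ℝ) (hσ : σ2 = (∫ z, (f z)^2 ∂μ) - (∫ z, f z ∂μ)^2)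
    (hσpos : 0 < σ2)
    (i : Fin d) :
    (1 / (2 * σ2)) * ∫ z, (∫ v, (f z - f (Function.update z i (v i)))^2 ∂μ) ∂μ
      ≤ (∑ j, lam j * (U i j)^2) / (2 * σ2) := by
  have hprob : IsProbabilityMeasure (volume.restrict (Set.Ioo (0:ℝ) 1)) := by
    constructor
    simp [Real.volume_Ioo]
  haveI : IsProbabilityMeasure μ := by
    rw [hμ]; infer_instance
  -- the difference quotient and its square
  set D : (Fin d → ℝ) × (Fin d → ℝ) → ℝ := fun p =>
    (f (Function.update p.1 i (p.2 i)) - f p.1) / (p.2 i - p.1 i) with hDdef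
  set H : (Fin d → ℝ) × (Fin d → ℝ) → ℝ := fun p => (D p)^2 with hHdef
  set G : (Fin d → ℝ) × (Fin d → ℝ) → ℝ := fun p =>
    (f p.1 - f (Function.update p.1 i (p.2 i)))^2 with hGdef
  -- exact pointwise identity G = H * (v_i - z_i)^2
  have hGH : ∀ p, G p = H p * (p.2 i - p.1 i)^2 := by
    intro p
    by_cases hc : p.2 i - p.1 i = 0
    · have h1 : p.2 i = p.1 i := by linarith [sub_eq_zero.mp hc]
      simp [hGdef, hHdef, hDdef, h1, Function.update_eq_self]
    · simp only [hGdef, hHdef, hDdef]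
      rw [div_pow, div_mul_cancel₀ _ (pow_ne_zero 2 hc)]
      ring
  -- a.e. the relevant coordinates lie in (0,1)
  have hae : ∀ᵐ z ∂μ, z i ∈ Set.Ioo (0:ℝ) 1 := by
    rw [hμ]
    exact Measure.tendsto_eval_ae_ae.eventually (ae_restrict_mem measurableSet_Ioo)
  have haeP : ∀ᵐ p ∂μ.prod μ, p.1 i ∈ Set.Ioo (0:ℝ) 1 ∧ p.2 i ∈ Set.Ioo (0:ℝ) 1 := by
    rw [Measure.ae_prod_iff_ae_ae]
    · filter_upwards [hae] with z hz
      filter_upwards [hae] with v hv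
      exact ⟨hz, hv⟩
    · apply MeasurableSet.inter
      · exact (measurable_pi_apply i).comp measurable_fst measurableSet_Ioo
      · exact (measurable_pi_apply i).comp measurable_snd measurableSet_Ioo
  have haeGH : ∀ᵐ p ∂μ.prod μ, G p ≤ H p := by
    filter_upwards [haeP] with p hp
    rw [hGH p]
    have hc : (p.2 i - p.1 i)^2 ≤ 1 := by
      obtain ⟨⟨h1, h2⟩, ⟨h3, h4⟩⟩ := hp
      nlinarith
    exact mul_le_of_le_one_right (sq_nonneg (D p)) hc
  -- integrability
  have hHint : Integrable H (μ.prod μ) := (hD i).integrable_sq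
  have hGmeas : AEStronglyMeasurable G (μ.prod μ) := by
    have : G = fun p => H p * (p.2 i - p.1 i)^2 := funext hGH
    rw [this]
    exact hHint.aestronglyMeasurable.mul
      ((((measurable_pi_apply i).comp measurable_snd).sub
        ((measurable_pi_apply i).comp measurable_fst)).pow_const 2).aestronglyMeasurable
  have hGint : Integrable G (μ.prod μ) := by
    refine hHint.mono' hGmeas ?_
    filter_upwards [haeGH] with p hp
    rw [Real.norm_eq_abs, abs_of_nonneg (sq_nonneg _)]
    exact hp
  -- compare the integrals
  have key : (∫ z, (∫ v, (f z - f (Function.update z i (v i)))^2 ∂μ) ∂μ)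
      ≤ ∑ j, lam j * (U i j)^2 := by
    have h1 : (∫ z, (∫ v, (f z - f (Function.update z i (v i)))^2 ∂μ) ∂μ)
        = ∫ p, G p ∂(μ.prod μ) := by
      exact integral_integral hGint
    have h2 : (∫ p, G p ∂(μ.prod μ)) ≤ ∫ p, H p ∂(μ.prod μ) :=
      integral_mono_ae hGint hHint haeGH
    have h3 : (∫ p, H p ∂(μ.prod μ)) = C i i := by
      rw [hC i i]
      have huncurry : Integrable (Function.uncurry fun z v =>
          ((f (Function.update z i (v i)) - f z) / (v i - z i)) *
          ((f (Function.update z i (v i)) - f z) / (v i - z i))) (μ.prod μ) := by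
        have he : (Function.uncurry fun z v =>
            ((f (Function.update z i (v i)) - f z) / (v i - z i)) *
            ((f (Function.update z i (v i)) - f z) / (v i - z i))) = H := by
          funext p
          simp [Function.uncurry, hHdef, hDdef, sq]
        rw [he]
        exact hHint
      refine Eq.trans ?_ (integral_integral huncurry).symm
      apply integral_congr_ae
      filter_upwards with p
      simp [Function.uncurry, hHdef, hDdef, sq]
    have h4 : C i i = ∑ j, lam j * (U i j)^2 := by
      rw [hdecomp]
      simp only [Matrix.mul_apply, Matrix.transpose_apply, Matrix.diagonal_apply]
      apply Finset.sum_congr rfl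
      intro j _
      rw [Finset.sum_eq_single j]
      · simp
        ring
      · intro b _ hb
        simp [hb]
      · simp
    rw [h1, ← h4]
    rw [← h3]
    exact h2
  have h2σ : (0:ℝ) < 2 * σ2 := by linarith
  calc (1 / (2 * σ2)) * ∫ z, (∫ v, (f z - f (Function.update z i (v i)))^2 ∂μ) ∂μ
      = (∫ z, (∫ v, (f z - f (Function.update z i (v i)))^2 ∂μ) ∂μ) / (2 * σ2) := by
        ring
    _ ≤ (∑ j, lam j * (U i j)^2) / (2 * σ2) := by
        exact (div_le_div_iff_of_pos_right h2σ).mpr key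
end

section
/- Under the same setup as Theorem gas1 (f square-integrable on (0,1)^d with uniform measure, C_gas = U Λ U^T with eigenvalues λ_1 ≥ ... ≥ λ_d ≥ 0, global activity scores γ_i(m) = Σ_{j=1}^m λ_j u_{ij}^2), for every i = 1,...,d and every m = 1,...,d-1, the upper Sobol' index satisfies S̄_i ≤ (γ_i(m) + λ_{m+1}) / (2σ²). -/
open MeasureTheory Matrix Finset

/-- Truncated global activity score bound for the upper Sobol' index on the unit cube:
`S̄ᵢ ≤ (γᵢ(m) + λ_{m+1}) / (2σ²)` for `1 ≤ m ≤ d-1`. -/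
theorem stmt_1 {d : ℕ} (f : (Fin d → ℝ) → ℝ)
    (μ : Measure (Fin d → ℝ))
    (hμ : μ = Measure.pi fun _ : Fin d => volume.restrict (Set.Ioo (0:ℝ) 1))
    (hf : MemLp f 2 μ)
    (hD : ∀ i : Fin d, MemLp (fun p : (Fin d → ℝ) × (Fin d → ℝ) =>
      (f (Function.update p.1 i (p.2 i)) - f p.1) / (p.2 i - p.1 i)) 2 (μ.prod μ))
    (C U : Matrix (Fin d) (Fin d) ℝ) (lam : Fin d → ℝ)
    (hC : ∀ i j, C i j = ∫ z, (∫ v,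
      ((f (Function.update z i (v i)) - f z) / (v i - z i)) *
      ((f (Function.update z j (v j)) - f z) / (v j - z j)) ∂μ) ∂μ)
    (hU : Uᵀ * U = 1)
    (hdecomp : C = U * diagonal lam * Uᵀ)
    (hmono : ∀ i j : Fin d, i ≤ j → lam j ≤ lam i)
    (hnonneg : ∀ j, 0 ≤ lam j)
    (σ2 : ℝ) (hσ : σ2 = (∫ z, (f z)^2 ∂μ) - (∫ z, f z ∂μ)^2)
    (hσpos : 0 < σ2)
    (i : Fin d) (m : ℕ) (hm1 : 1 ≤ m) (hm : m < d) :
    (1 / (2 * σ2)) * ∫ z, (∫ v, (f z - f (Function.update z i (v i)))^2 ∂μ) ∂μ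
      ≤ ((∑ j ∈ Finset.univ.filter (fun j : Fin d => j.1 < m), lam j * (U i j)^2)
          + lam ⟨m, hm⟩) / (2 * σ2) := by
  have hprob : IsProbabilityMeasure (volume.restrict (Set.Ioo (0:ℝ) 1)) := by
    constructor; simp [Real.volume_Ioo]
  have hμprob : IsProbabilityMeasure μ := by rw [hμ]; infer_instance
  have hμsf : SFinite μ := by rw [hμ]; infer_instance
  -- a.e. membership in (0,1) for coordinate i
  have hae : ∀ᵐ x ∂μ, x i ∈ Set.Ioo (0:ℝ) 1 := by
    rw [hμ]
    exact MeasureTheory.Measure.tendsto_eval_ae_ae.eventually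
      (ae_restrict_mem measurableSet_Ioo)
  set g : (Fin d → ℝ) × (Fin d → ℝ) → ℝ := fun p =>
    (f (Function.update p.1 i (p.2 i)) - f p.1) / (p.2 i - p.1 i) with hg
  have hg2 : Integrable (fun p => g p ^ 2) (μ.prod μ) := (hD i).integrable_sq
  -- pointwise bound
  have hpt : ∀ z v : Fin d → ℝ, z i ∈ Set.Ioo (0:ℝ) 1 → v i ∈ Set.Ioo (0:ℝ) 1 →
      (f z - f (Function.update z i (v i)))^2 ≤ g (z, v) ^ 2 := by
    intro z v hz hv
    simp only [hg]
    rcases eq_or_ne (v i) (z i) with h | h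
    · rw [h, Function.update_eq_self]
      simp [pow_two_nonneg]
    · have hc : v i - z i ≠ 0 := sub_ne_zero.mpr h
      rw [div_pow]
      have hc2 : (0:ℝ) < (v i - z i)^2 := by positivity
      have hc1 : (v i - z i)^2 ≤ 1 := by
        obtain ⟨hz0, hz1⟩ := hz; obtain ⟨hv0, hv1⟩ := hv; nlinarith
      have hnum : (f z - f (Function.update z i (v i)))^2
          = (f (Function.update z i (v i)) - f z)^2 := by ring
      rw [hnum, le_div_iff₀ hc2]
      nlinarith [sq_nonneg (f (Function.update z i (v i)) - f z)]
  -- the iterated integral is bounded by C i i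
  have hCii : (∫ z, (∫ v, (f z - f (Function.update z i (v i)))^2 ∂μ) ∂μ) ≤ C i i := by
    have hCrw : C i i = ∫ z, (∫ v, g (z, v) ^ 2 ∂μ) ∂μ := by
      rw [hC i i]
      congr 1; ext z; congr 1; ext v
      simp [hg, pow_two]
    rw [hCrw]
    apply integral_mono_of_nonneg
    · exact Filter.Eventually.of_forall fun z => integral_nonneg fun v => sq_nonneg _
    · exact hg2.integral_prod_left
    · filter_upwards [hae, hg2.prod_right_ae] with z hz hint
      apply integral_mono_of_nonneg
      · exact Filter.Eventually.of_forall fun v => sq_nonneg _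
      · exact hint
      · filter_upwards [hae] with v hv using hpt z v hz hv
  -- C i i equals the full spectral sum
  have hCsum : C i i = ∑ j, lam j * (U i j)^2 := by
    rw [hdecomp]
    simp [Matrix.mul_apply, Matrix.diagonal_apply, Finset.sum_mul, Matrix.transpose_apply]
    congr 1; ext j
    ring
  -- row norm
  have hrow : ∑ j, (U i j)^2 = 1 := by
    have h1 : U * Uᵀ = 1 := mul_eq_one_comm.mp hU
    have := congrFun (congrFun h1 i) i
    simp [Matrix.mul_apply, Matrix.transpose_apply, Matrix.one_apply, pow_two] at this ⊢
    rw [← this]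
  -- spectral sum bound
  have hsum : (∑ j, lam j * (U i j)^2)
      ≤ (∑ j ∈ Finset.univ.filter (fun j : Fin d => j.1 < m), lam j * (U i j)^2)
        + lam ⟨m, hm⟩ := by
    rw [← Finset.sum_filter_add_sum_filter_not Finset.univ (fun j : Fin d => j.1 < m)]
    gcongr
    calc ∑ j ∈ Finset.univ.filter (fun j : Fin d => ¬ j.1 < m), lam j * (U i j)^2
        ≤ ∑ j ∈ Finset.univ.filter (fun j : Fin d => ¬ j.1 < m), lam ⟨m, hm⟩ * (U i j)^2 := by
          apply Finset.sum_le_sum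
          intro j hj
          simp at hj
          exact mul_le_mul_of_nonneg_right (hmono ⟨m, hm⟩ j (show (⟨m, hm⟩ : Fin d) ≤ j from hj)) (sq_nonneg _)
      _ = lam ⟨m, hm⟩ * ∑ j ∈ Finset.univ.filter (fun j : Fin d => ¬ j.1 < m), (U i j)^2 := by
          rw [Finset.mul_sum]
      _ ≤ lam ⟨m, hm⟩ * ∑ j, (U i j)^2 := by
          apply mul_le_mul_of_nonneg_left _ (hnonneg _)
          exact Finset.sum_le_sum_of_subset_of_nonneg (Finset.filter_subset _ _)
            (fun j _ _ => sq_nonneg _)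
      _ = lam ⟨m, hm⟩ := by rw [hrow, mul_one]
  have hfinal : (∫ z, (∫ v, (f z - f (Function.update z i (v i)))^2 ∂μ) ∂μ)
      ≤ (∑ j ∈ Finset.univ.filter (fun j : Fin d => j.1 < m), lam j * (U i j)^2)
        + lam ⟨m, hm⟩ := le_trans hCii (hCsum ▸ hsum)
  rw [one_div_mul_eq_div]
  exact div_le_div_of_nonneg_right hfinal (by linarith) |>.trans_eq rfl
end

section
/- Let z = (z_1,...,z_d) have the d-dimensional standard normal distribution and let f(z) = (1/2) z^T A z + b^T z for a symmetric d×d real matrix A and b ∈ ℝ^d. Then the upper Sobol' index equals the global activity score ratio exactly: S̄_i = γ_i(d)/σ² for all i = 1,...,d, where γ_i(d) is the i-th diagonal entry of C_gas and σ² = Var(f(z)). -/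
open MeasureTheory Matrix ProbabilityTheory
open MeasureTheory ProbabilityTheory Real Set Function
open scoped ENNReal NNReal

noncomputable section
namespace Stmt6

abbrev γ : Measure ℝ := gaussianReal 0 1

lemma gauss_wd : γ = (volume : Measure ℝ).withDensity
    (fun x => ((gaussianPDFReal 0 1 x).toNNReal : ℝ≥0∞)) := by
  rw [show γ = gaussianReal 0 1 from rfl, gaussianReal_of_var_ne_zero _ one_ne_zero,
    gaussianPDF_def]
  rfl

lemma pdf_eq (x : ℝ) : gaussianPDFReal 0 1 x = (√(2 * π))⁻¹ * rexp (-(1/2) * x ^ 2) := by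
  simp only [gaussianPDFReal_def, NNReal.coe_one, mul_one, sub_zero]
  have : -x ^ 2 / 2 = -(1/2) * x ^ 2 := by ring
  rw [this]

lemma integral_gauss (g : ℝ → ℝ) :
    ∫ x, g x ∂γ = (√(2 * π))⁻¹ * ∫ x, rexp (-(1/2) * x ^ 2) * g x := by
  rw [gauss_wd, integral_withDensity_eq_integral_smul
    ((measurable_gaussianPDFReal 0 1).real_toNNReal), ← integral_const_mul]
  congr 1 with x
  rw [NNReal.smul_def, Real.coe_toNNReal _ (gaussianPDFReal_nonneg 0 1 x), pdf_eq,
    smul_eq_mul]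
  ring

lemma integrable_gauss_iff {g : ℝ → ℝ} :
    Integrable g γ ↔ Integrable (fun x => g x * gaussianPDFReal 0 1 x) volume := by
  rw [gauss_wd]
  have h := integrable_withDensity_iff (μ := (volume : Measure ℝ))
    (f := fun x => ((gaussianPDFReal 0 1 x).toNNReal : ℝ≥0∞))
    ((measurable_gaussianPDFReal 0 1).real_toNNReal.coe_nnreal_ennreal)
    (Filter.Eventually.of_forall fun x => ENNReal.coe_lt_top) (g := g)
  rw [h]
  apply integrable_congr
  refine Filter.Eventually.of_forall fun x => ?_
  simp [Real.coe_toNNReal _ (gaussianPDFReal_nonneg 0 1 x)]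

lemma integrable_pow_gauss (n : ℕ) : Integrable (fun x => x ^ n) γ := by
  rw [integrable_gauss_iff]
  have h := integrable_rpow_mul_exp_neg_mul_sq (b := 1/2) (by norm_num) (s := n)
    (lt_of_lt_of_le neg_one_lt_zero (Nat.cast_nonneg n))
  simp only [rpow_natCast] at h
  refine (h.const_mul ((√(2 * π))⁻¹)).congr (Filter.Eventually.of_forall fun x => ?_)
  simp only [pdf_eq]; ring

end Stmt6

namespace Stmt6
lemma gauss_map_neg : γ.map (fun x => -x) = γ := by
  have h := gaussianReal_map_const_mul (μ := 0) (v := 1) (-1)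
  simp only [neg_mul, one_mul, mul_zero] at h
  have hv : (⟨(-1) ^ 2, by positivity⟩ : NNReal) * 1 = 1 := by ext; norm_num
  convert h using 2
  exact hv.symm

lemma odd_moment (n : ℕ) (hn : Odd n) : ∫ x, x ^ n ∂γ = 0 := by
  have h : ∫ x, x ^ n ∂γ = ∫ x, (-x) ^ n ∂γ := by
    conv_lhs => rw [← gauss_map_neg]
    rw [integral_map (measurable_neg.aemeasurable)
      (by rw [gauss_map_neg]; exact (measurable_id.pow_const n).aestronglyMeasurable)]
  simp only [hn.neg_pow, integral_neg] at h
  linarith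

lemma even_moment (n : ℕ) (hn : Even n) : ∫ x, x ^ n ∂γ =
    (√(2 * π))⁻¹ * (2 * ((1/2 : ℝ) ^ (-(((n:ℝ)) + 1)/2) * (1/2) * Gamma (((n:ℝ) + 1)/2))) := by
  rw [integral_gauss]
  have habs : ∀ x : ℝ, rexp (-(1/2) * |x| ^ 2) * |x| ^ n = rexp (-(1/2) * x ^ 2) * x ^ n := by
    intro x
    rw [sq_abs, pow_abs, abs_of_nonneg (hn.pow_nonneg x)]
  have h2 : ∫ x, rexp (-(1/2) * x ^ 2) * x ^ n
      = 2 * ∫ x in Ioi (0:ℝ), rexp (-(1/2) * x ^ 2) * x ^ n := by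
    rw [← integral_comp_abs (f := fun x => rexp (-(1/2) * x ^ 2) * x ^ n)]
    exact integral_congr_ae (Filter.Eventually.of_forall fun x => (habs x).symm)
  rw [h2]
  congr 1
  have h3 := integral_rpow_mul_exp_neg_mul_rpow (p := 2) (q := n) (b := 1/2)
    (by norm_num) (lt_of_lt_of_le neg_one_lt_zero (Nat.cast_nonneg n)) (by norm_num)
  simp only [rpow_natCast, rpow_two] at h3
  rw [← h3]
  congr 1
  apply integral_congr_ae
  refine Filter.Eventually.of_forall fun x => ?_
  ring_nf
end Stmt6

namespace Stmt6
lemma G32 : Real.Gamma (3/2) = √π / 2 := by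
  rw [show (3:ℝ)/2 = 1/2 + 1 by norm_num, Real.Gamma_add_one (by norm_num),
    Real.Gamma_one_half_eq]
  ring

lemma G52 : Real.Gamma (5/2) = 3/4 * √π := by
  rw [show (5:ℝ)/2 = 3/2 + 1 by norm_num, Real.Gamma_add_one (by norm_num), G32]
  ring

lemma half_rpow (a : ℝ) : (1/2 : ℝ) ^ (-a) = (2:ℝ) ^ a := by
  rw [one_div, Real.inv_rpow (by norm_num), ← Real.rpow_neg (by norm_num), neg_neg]

lemma two_rpow_32 : (2:ℝ) ^ ((3:ℝ)/2) = 2 * √2 := by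
  rw [show (3:ℝ)/2 = 1 + 1/2 by norm_num, Real.rpow_add two_pos, Real.rpow_one,
    ← Real.sqrt_eq_rpow]

lemma two_rpow_52 : (2:ℝ) ^ ((5:ℝ)/2) = 4 * √2 := by
  rw [show (5:ℝ)/2 = 2 + 1/2 by norm_num, Real.rpow_add two_pos, ← Real.sqrt_eq_rpow,
    show (2:ℝ) ^ (2:ℝ) = 4 by rw [rpow_two]; norm_num]

lemma moment_two : ∫ x, x ^ 2 ∂γ = 1 := by
  rw [even_moment 2 (by decide)]
  rw [show -((((2:ℕ):ℝ)) + 1)/2 = -((3:ℝ)/2) by norm_num]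
  rw [show (((2:ℕ):ℝ) + 1)/2 = (3:ℝ)/2 by norm_num, half_rpow, two_rpow_32, G32, Real.sqrt_mul two_pos.le]
  have h2 : (0:ℝ) < √2 := Real.sqrt_pos.mpr two_pos
  have hp : (0:ℝ) < √π := Real.sqrt_pos.mpr pi_pos
  field_simp

lemma moment_four : ∫ x, x ^ 4 ∂γ = 3 := by
  rw [even_moment 4 (by decide)]
  rw [show -((((4:ℕ):ℝ)) + 1)/2 = -((5:ℝ)/2) by norm_num]
  rw [show (((4:ℕ):ℝ) + 1)/2 = (5:ℝ)/2 by norm_num, half_rpow, two_rpow_52, G52,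
    Real.sqrt_mul two_pos.le]
  have h2 : (0:ℝ) < √2 := Real.sqrt_pos.mpr two_pos
  have hp : (0:ℝ) < √π := Real.sqrt_pos.mpr pi_pos
  field_simp
end Stmt6

namespace Stmt6
lemma integrable_cpow (c : ℝ) (k : ℕ) : Integrable (fun x => c * x ^ k) γ :=
  (integrable_pow_gauss k).const_mul c

lemma integral_cpow (c : ℝ) (k : ℕ) : ∫ x, c * x ^ k ∂γ = c * ∫ x, x ^ k ∂γ :=
  integral_const_mul c _

lemma integral_poly4 (c0 c1 c2 c3 c4 : ℝ) :
    ∫ x, (c0 * x ^ 0 + c1 * x ^ 1 + c2 * x ^ 2 + c3 * x ^ 3 + c4 * x ^ 4) ∂γ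
      = c0 + c2 + 3 * c4 := by
  have i0 := integrable_cpow c0 0
  have i1 := integrable_cpow c1 1
  have i2 := integrable_cpow c2 2
  have i3 := integrable_cpow c3 3
  have i4 := integrable_cpow c4 4
  have i01 : Integrable (fun x => c0 * x ^ 0 + c1 * x ^ 1) γ := i0.add i1
  have i012 : Integrable (fun x => c0 * x ^ 0 + c1 * x ^ 1 + c2 * x ^ 2) γ := i01.add i2
  have i0123 : Integrable (fun x => c0 * x ^ 0 + c1 * x ^ 1 + c2 * x ^ 2 + c3 * x ^ 3) γ :=
    i012.add i3
  rw [integral_add i0123 i4,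
    integral_add i012 i3, integral_add i01 i2,
    integral_add i0 i1, integral_cpow, integral_cpow, integral_cpow, integral_cpow,
    integral_cpow, moment_two, moment_four, odd_moment 1 (by decide),
    odd_moment 3 (by decide)]
  have : ∫ x, x ^ 0 ∂γ = 1 := by
    simp
  rw [this]
  ring

lemma inner_R (q β : ℝ) : ∫ x, (q + β * x) ^ 2 ∂γ = q ^ 2 + β ^ 2 := by
  have h : ∀ x : ℝ, (q + β * x) ^ 2
      = q^2 * x ^ 0 + (2*q*β) * x ^ 1 + β^2 * x ^ 2 + 0 * x ^ 3 + 0 * x ^ 4 := by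
    intro x; ring
  rw [integral_congr_ae (Filter.Eventually.of_forall h), integral_poly4]
  ring

lemma inner_L (u q β : ℝ) : ∫ x, ((u - x) * (q + β * x)) ^ 2 ∂γ
    = u^2*q^2 + u^2*β^2 - 4*u*q*β + q^2 + 3*β^2 := by
  have h : ∀ x : ℝ, ((u - x) * (q + β * x)) ^ 2
      = (u^2*q^2) * x ^ 0 + (2*u^2*q*β - 2*u*q^2) * x ^ 1
        + (u^2*β^2 - 4*u*q*β + q^2) * x ^ 2 + (2*q*β - 2*u*β^2) * x ^ 3 + β^2 * x ^ 4 := by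
    intro x; ring
  rw [integral_congr_ae (Filter.Eventually.of_forall h), integral_poly4]
  ring
end Stmt6

namespace Stmt6
variable {d : ℕ}

abbrev μd (d : ℕ) : Measure (Fin d → ℝ) := Measure.pi fun _ => γ

lemma preimage_update (i : Fin d) (s : Fin d → Set ℝ) :
    (fun p : (Fin d → ℝ) × ℝ => Function.update p.1 i p.2) ⁻¹' (Set.pi univ s)
      = (Set.pi univ (Function.update s i univ)) ×ˢ s i := by
  ext ⟨z, x⟩
  simp only [mem_preimage, mem_pi, mem_univ, forall_true_left, mem_prod]
  constructor
  · intro h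
    refine ⟨fun j => ?_, by simpa using h i⟩
    rcases eq_or_ne j i with rfl | hj
    · simp
    · have := h j
      rw [update_of_ne hj] at this
      rwa [update_of_ne hj]
  · rintro ⟨h1, h2⟩ j
    rcases eq_or_ne j i with rfl | hj
    · simpa using h2
    · have := h1 j
      rw [update_of_ne hj] at this
      rwa [update_of_ne hj]

lemma map_update (i : Fin d) :
    ((μd d).prod γ).map (fun p => Function.update p.1 i p.2) = μd d := by
  refine (Measure.pi_eq fun s hs => ?_).symm
  rw [Measure.map_apply measurable_update' (MeasurableSet.univ_pi hs), preimage_update,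
    Measure.prod_prod, Measure.pi_pi]
  have h1 : ∀ j, γ (Function.update s i univ j) = Function.update (fun j => γ (s j)) i 1 j := by
    intro j
    rcases eq_or_ne j i with rfl | hj
    · simp
    · rw [update_of_ne hj, update_of_ne hj]
  rw [Finset.prod_congr rfl (fun j _ => h1 j), Finset.prod_update_of_mem (Finset.mem_univ i),
    ← Finset.mul_prod_erase Finset.univ _ (Finset.mem_univ i),
    Finset.sdiff_singleton_eq_erase]
  rw [one_mul, mul_comm]
end Stmt6

namespace Stmt6
variable {d : ℕ}

lemma map_eval (i : Fin d) : (μd d).map (fun z => z i) = γ := by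
  conv_lhs => rw [← map_update i]
  rw [Measure.map_map (measurable_pi_apply i) measurable_update']
  have h : ((fun z : Fin d → ℝ => z i) ∘ fun p : (Fin d → ℝ) × ℝ => Function.update p.1 i p.2)
      = fun p => p.2 := by funext p; simp
  rw [h, ← Measure.snd, Measure.snd_prod]

lemma integral_eval (i : Fin d) (g : ℝ → ℝ) (hg : AEStronglyMeasurable g γ) :
    ∫ z, g (z i) ∂(μd d) = ∫ x, g x ∂γ := by
  rw [← map_eval i, integral_map (measurable_pi_apply i).aemeasurable (by rwa [map_eval i])]

lemma comp_update (i : Fin d) (g : ℝ → ℝ) (h : (Fin d → ℝ) → ℝ)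
    (hinv : ∀ z x, h (Function.update z i x) = h z) :
    ((fun z => g (z i) * h z) ∘ fun p : (Fin d → ℝ) × ℝ => Function.update p.1 i p.2)
      = fun p => h p.1 * g p.2 := by
  funext p
  simp only [Function.comp_apply, update_self, hinv, mul_comm]

lemma integrable_eval_mul (i : Fin d) {g : ℝ → ℝ} {h : (Fin d → ℝ) → ℝ}
    (hg : Measurable g) (hh : Measurable h)
    (hinv : ∀ z x, h (Function.update z i x) = h z)
    (hgint : Integrable g γ) (hhint : Integrable h (μd d)) :
    Integrable (fun z => g (z i) * h z) (μd d) := by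
  have hm : Measurable fun z : Fin d → ℝ => g (z i) * h z :=
    (hg.comp (measurable_pi_apply i)).mul hh
  rw [← map_update i, integrable_map_measure (by rw [map_update i]; exact hm.aestronglyMeasurable)
    measurable_update'.aemeasurable, comp_update i g h hinv]
  exact hhint.mul_prod hgint

lemma integral_eval_mul (i : Fin d) {g : ℝ → ℝ} {h : (Fin d → ℝ) → ℝ}
    (hg : Measurable g) (hh : Measurable h)
    (hinv : ∀ z x, h (Function.update z i x) = h z) :
    ∫ z, g (z i) * h z ∂(μd d) = (∫ x, g x ∂γ) * ∫ z, h z ∂(μd d) := by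
  have hm : Measurable fun z : Fin d → ℝ => g (z i) * h z :=
    (hg.comp (measurable_pi_apply i)).mul hh
  conv_lhs => rw [← map_update i]
  rw [integral_map measurable_update'.aemeasurable
    (by rw [map_update i]; exact hm.aestronglyMeasurable)]
  have : ∀ p : (Fin d → ℝ) × ℝ, g (Function.update p.1 i p.2 i) * h (Function.update p.1 i p.2)
      = h p.1 * g p.2 := by
    intro p; rw [update_self, hinv, mul_comm]
  rw [integral_congr_ae (Filter.Eventually.of_forall this), integral_prod_mul, mul_comm]
end Stmt6

namespace Stmt6
variable {d : ℕ}

lemma integrable_coord_pow (j : Fin d) (n : ℕ) :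
    Integrable (fun z : Fin d → ℝ => (z j) ^ n) (μd d) := by
  have := integrable_eval_mul j (g := fun x => x ^ n) (h := fun _ => (1:ℝ))
    (measurable_id.pow_const n) measurable_const (fun _ _ => rfl)
    (integrable_pow_gauss n) (integrable_const 1)
  simpa using this

lemma integrable_coord_mul (j k : Fin d) :
    Integrable (fun z : Fin d → ℝ => z j * z k) (μd d) := by
  rcases eq_or_ne j k with rfl | hjk
  · have := integrable_coord_pow j 2
    refine this.congr (Filter.Eventually.of_forall fun z => ?_)
    ring
  · have := integrable_eval_mul j (g := fun x => x) (h := fun z => z k)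
      measurable_id (measurable_pi_apply k)
      (fun z x => Function.update_of_ne hjk.symm _ _)
      (by simpa using integrable_pow_gauss 1)
      (by simpa using integrable_coord_pow k 1)
    refine this.congr (Filter.Eventually.of_forall fun z => ?_)
    ring

lemma integrable_affine (w : Fin d → ℝ) (c : ℝ) :
    Integrable (fun z : Fin d → ℝ => (∑ j, w j * z j) + c) (μd d) := by
  refine Integrable.add (integrable_finset_sum _ fun j _ => ?_) (integrable_const c)
  exact (by simpa using integrable_coord_pow j 1 : Integrable (fun z : Fin d → ℝ => z j) (μd d)).const_mul (w j)

lemma integrable_affine_sq (w : Fin d → ℝ) (c : ℝ) :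
    Integrable (fun z : Fin d → ℝ => ((∑ j, w j * z j) + c) ^ 2) (μd d) := by
  have expand : ∀ z : Fin d → ℝ, ((∑ j, w j * z j) + c) ^ 2
      = (∑ j, ∑ k, (w j * w k) * (z j * z k)) + ((∑ j, (2*c*w j) * z j) + c^2) := by
    intro z
    have h1 : (∑ j, ∑ k, (w j * w k) * (z j * z k))
        = (∑ j, w j * z j) * (∑ k, w k * z k) := by
      rw [Finset.sum_mul_sum]
      exact Finset.sum_congr rfl fun j _ => Finset.sum_congr rfl fun k _ => by ring
    have h2 : (∑ j, (2*c*w j) * z j) = 2 * c * (∑ j, w j * z j) := by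
      rw [Finset.mul_sum]
      exact Finset.sum_congr rfl fun j _ => by ring
    rw [h1, h2]; ring
  refine (Integrable.add (integrable_finset_sum _ fun j _ => integrable_finset_sum _
    fun k _ => (integrable_coord_mul j k).const_mul _)
    (Integrable.add (integrable_finset_sum _ fun j _ =>
      (by simpa using integrable_coord_pow j 1 : Integrable (fun z : Fin d → ℝ => z j) (μd d)).const_mul _)
      (integrable_const (c^2)))).congr (Filter.Eventually.of_forall fun z => (expand z).symm)

lemma sum_split (i : Fin d) (v z : Fin d → ℝ) :
    ∑ j, v j * z j = (∑ j, (if j = i then 0 else v j) * z j) + v i * z i := by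
  have h1 := Finset.sum_erase_add Finset.univ (fun j => v j * z j) (Finset.mem_univ i)
  have h2 := Finset.sum_erase_add Finset.univ
    (fun j => (if j = i then 0 else v j) * z j) (Finset.mem_univ i)
  have h3 : ∑ j ∈ Finset.univ.erase i, (if j = i then 0 else v j) * z j
      = ∑ j ∈ Finset.univ.erase i, v j * z j :=
    Finset.sum_congr rfl fun j hj => by rw [if_neg (Finset.mem_erase.mp hj).1]
  rw [← h1, ← h2, h3]
  simp
end Stmt6

namespace Stmt6
open Matrix
variable {d : ℕ}

def wv (A : Matrix (Fin d) (Fin d) ℝ) (i : Fin d) : Fin d → ℝ :=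
  fun j => if j = i then 0 else A i j

def alf (A : Matrix (Fin d) (Fin d) ℝ) (b : Fin d → ℝ) (i : Fin d) : (Fin d → ℝ) → ℝ :=
  fun z => (∑ j, wv A i j * z j) + b i

def qf (A : Matrix (Fin d) (Fin d) ℝ) (b : Fin d → ℝ) (i : Fin d) : (Fin d → ℝ) → ℝ :=
  fun z => alf A b i z + (A i i / 2) * z i

lemma hAz (A : Matrix (Fin d) (Fin d) ℝ) (i : Fin d) (z : Fin d → ℝ) :
    (A *ᵥ z) i = (∑ j, wv A i j * z j) + A i i * z i := by
  have h : (A *ᵥ z) i = ∑ j, A i j * z j := by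
    simp [Matrix.mulVec, dotProduct]
  rw [h, sum_split i (fun j => A i j) z]
  rfl

lemma alf_update (A : Matrix (Fin d) (Fin d) ℝ) (b : Fin d → ℝ) (i : Fin d) (z : Fin d → ℝ)
    (x : ℝ) : alf A b i (Function.update z i x) = alf A b i z := by
  unfold alf
  congr 1
  refine Finset.sum_congr rfl fun j _ => ?_
  rcases eq_or_ne j i with rfl | hj
  · simp [wv]
  · rw [Function.update_of_ne hj]

lemma delta_eq (A : Matrix (Fin d) (Fin d) ℝ) (hA : A.IsSymm) (b : Fin d → ℝ) (i : Fin d)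
    (z : Fin d → ℝ) (x : ℝ) :
    ((1/2) * (z ⬝ᵥ (A *ᵥ z)) + b ⬝ᵥ z)
      - ((1/2) * ((Function.update z i x) ⬝ᵥ (A *ᵥ Function.update z i x))
          + b ⬝ᵥ Function.update z i x)
      = (z i - x) * (qf A b i z + (A i i / 2) * x) := by
  have hsym : ∀ u v : Fin d → ℝ, u ⬝ᵥ (A *ᵥ v) = v ⬝ᵥ (A *ᵥ u) := by
    intro u v
    rw [Matrix.dotProduct_mulVec, ← Matrix.mulVec_transpose, hA.eq, dotProduct_comm]
  have hw : Function.update z i x = z + Pi.single i (x - z i) := by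
    funext j
    rcases eq_or_ne j i with rfl | hj
    · simp
    · simp [Function.update_of_ne hj, Pi.single_eq_of_ne hj]
  rw [hw, Matrix.mulVec_add, dotProduct_add, add_dotProduct,
    add_dotProduct, dotProduct_add, hsym z (Pi.single i (x - z i))]
  simp only [single_dotProduct, dotProduct_single, Matrix.mulVec_single, Pi.smul_apply,
    op_smul_eq_mul, Matrix.col_apply]
  rw [hAz A i z]
  unfold qf alf
  ring
end Stmt6

namespace Stmt6
open Matrix
variable {d : ℕ}

lemma alf_measurable (A : Matrix (Fin d) (Fin d) ℝ) (b : Fin d → ℝ) (i : Fin d) :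
    Measurable (alf A b i) := by
  unfold alf
  exact (Finset.measurable_sum _ fun j _ => (measurable_pi_apply j).const_mul _).add_const _

lemma qf_measurable (A : Matrix (Fin d) (Fin d) ℝ) (b : Fin d → ℝ) (i : Fin d) :
    Measurable (qf A b i) := by
  unfold qf
  exact (alf_measurable A b i).add ((measurable_pi_apply i).const_mul _)

lemma qf_affine (A : Matrix (Fin d) (Fin d) ℝ) (b : Fin d → ℝ) (i : Fin d) (z : Fin d → ℝ) :
    qf A b i z = (∑ j, (fun j => if j = i then A i i / 2 else A i j) j * z j) + b i := by
  rw [sum_split i (fun j => if j = i then A i i / 2 else A i j) z]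
  have h : ∀ j, (if j = i then (0:ℝ) else if j = i then A i i / 2 else A i j) = wv A i j := by
    intro j
    rcases eq_or_ne j i with rfl | hj
    · simp [wv]
    · simp [wv, hj]
  unfold qf alf
  simp [h]
  ring

lemma qf_sq_integrable (A : Matrix (Fin d) (Fin d) ℝ) (b : Fin d → ℝ) (i : Fin d) :
    Integrable (fun z => (qf A b i z)^2) (μd d) := by
  refine (integrable_affine_sq (fun j => if j = i then A i i / 2 else A i j) (b i)).congr
    (Filter.Eventually.of_forall fun z => ?_)
  dsimp only
  rw [qf_affine]

lemma alf_integrable (A : Matrix (Fin d) (Fin d) ℝ) (b : Fin d → ℝ) (i : Fin d) :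
    Integrable (alf A b i) (μd d) := integrable_affine (wv A i) (b i)

lemma alf_sq_integrable (A : Matrix (Fin d) (Fin d) ℝ) (b : Fin d → ℝ) (i : Fin d) :
    Integrable (fun z => (alf A b i z)^2) (μd d) := integrable_affine_sq (wv A i) (b i)

end Stmt6

end

/-- For a quadratic function under the standard Gaussian, the upper Sobol' index equals
`γᵢ(d)/σ²` exactly. -/
theorem stmt_6 {d : ℕ} (A : Matrix (Fin d) (Fin d) ℝ) (b : Fin d → ℝ)
    (hA : A.IsSymm)
    (f : (Fin d → ℝ) → ℝ)
    (hf : ∀ z, f z = (1/2) * (z ⬝ᵥ (A *ᵥ z)) + b ⬝ᵥ z)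
    (μ : Measure (Fin d → ℝ))
    (hμ : μ = Measure.pi fun _ : Fin d => gaussianReal 0 1)
    (σ2 : ℝ) (hσ : σ2 = (∫ z, (f z)^2 ∂μ) - (∫ z, f z ∂μ)^2)
    (hσpos : 0 < σ2)
    (i : Fin d) :
    (1 / (2 * σ2)) * ∫ z, (∫ v, (f z - f (Function.update z i (v i)))^2 ∂μ) ∂μ
      = (∫ z, (∫ v, ((f z - f (Function.update z i (v i))) / (z i - v i))^2 ∂μ) ∂μ) / σ2 := by
  subst hμ
  set β : ℝ := A i i / 2 with hβdef
  have hΔ : ∀ (z : Fin d → ℝ) (x : ℝ), f z - f (Function.update z i x)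
      = (z i - x) * (Stmt6.qf A b i z + β * x) := by
    intro z x
    rw [hf, hf]
    exact Stmt6.delta_eq A hA b i z x
  have hqm := Stmt6.qf_measurable A b i
  -- inner integral computations
  have hL : ∀ z : Fin d → ℝ,
      (∫ v, (f z - f (Function.update z i (v i)))^2 ∂(Measure.pi fun _ : Fin d => gaussianReal 0 1))
        = (z i)^2*(Stmt6.qf A b i z)^2 + (z i)^2*β^2 - 4*(z i)*(Stmt6.qf A b i z)*β
          + (Stmt6.qf A b i z)^2 + 3*β^2 := by
    intro z
    have h1 : ∀ v : Fin d → ℝ, (f z - f (Function.update z i (v i)))^2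
        = (fun x => ((z i - x) * (Stmt6.qf A b i z + β * x))^2) (v i) := by
      intro v; rw [hΔ]
    rw [integral_congr_ae (Filter.Eventually.of_forall h1),
      Stmt6.integral_eval i _ (by fun_prop : Measurable
        (fun x => ((z i - x) * (Stmt6.qf A b i z + β * x))^2)).aestronglyMeasurable,
      Stmt6.inner_L (z i) (Stmt6.qf A b i z) β]
  have hR : ∀ z : Fin d → ℝ,
      (∫ v, ((f z - f (Function.update z i (v i))) / (z i - v i))^2
          ∂(Measure.pi fun _ : Fin d => gaussianReal 0 1))
        = (Stmt6.qf A b i z)^2 + β^2 := by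
    intro z
    have h1 : ∀ v : Fin d → ℝ, ((f z - f (Function.update z i (v i))) / (z i - v i))^2
        = (fun x => (((z i - x) * (Stmt6.qf A b i z + β * x)) / (z i - x))^2) (v i) := by
      intro v; rw [hΔ]
    rw [integral_congr_ae (Filter.Eventually.of_forall h1),
      Stmt6.integral_eval i _ (by fun_prop : Measurable
        (fun x => (((z i - x) * (Stmt6.qf A b i z + β * x)) / (z i - x))^2)).aestronglyMeasurable]
    have hae : ∀ᵐ x ∂(gaussianReal 0 1 : Measure ℝ), x ≠ z i := by
      have h0 : (gaussianReal 0 1 : Measure ℝ) {z i} = 0 :=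
        gaussianReal_absolutelyContinuous 0 one_ne_zero (Real.volume_singleton)
      have hset : {x : ℝ | ¬ x ≠ z i} = {z i} := by ext x; simp
      rw [Filter.eventually_iff, mem_ae_iff]
      rw [show {x : ℝ | x ≠ z i}ᶜ = {z i} by rw [← hset]; ext x; simp]
      exact h0
    have h2 : ∀ᵐ x ∂(gaussianReal 0 1 : Measure ℝ),
        (((z i - x) * (Stmt6.qf A b i z + β * x)) / (z i - x))^2
          = (Stmt6.qf A b i z + β * x)^2 := by
      refine hae.mono fun x hx => ?_
      rw [mul_div_cancel_left₀ _ (sub_ne_zero.mpr (Ne.symm hx))]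
    rw [integral_congr_ae h2, Stmt6.inner_R]
  rw [integral_congr_ae (Filter.Eventually.of_forall hL),
    integral_congr_ae (Filter.Eventually.of_forall hR)]
  -- key identity between outer integrals
  have hg1m : Measurable (fun x : ℝ => x^2 - 1) := by fun_prop
  have hg2m : Measurable (fun x : ℝ => x^3 - 3*x) := by fun_prop
  have hg3m : Measurable (fun x : ℝ => x^4 - 4*x^2 + 1) := by fun_prop
  have hα2inv : ∀ (z : Fin d → ℝ) (x : ℝ),
      (fun z => (Stmt6.alf A b i z)^2) (Function.update z i x)
        = (fun z => (Stmt6.alf A b i z)^2) z := by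
    intro z x; dsimp only; rw [Stmt6.alf_update]
  have hαinv : ∀ (z : Fin d → ℝ) (x : ℝ),
      (fun z => 2*β*(Stmt6.alf A b i z)) (Function.update z i x)
        = (fun z => 2*β*(Stmt6.alf A b i z)) z := by
    intro z x; dsimp only; rw [Stmt6.alf_update]
  have hg1int : Integrable (fun x : ℝ => x^2 - 1) Stmt6.γ :=
    (Stmt6.integrable_pow_gauss 2).sub (integrable_const 1)
  have hg2int : Integrable (fun x : ℝ => x^3 - 3*x) Stmt6.γ := by
    refine (Stmt6.integrable_pow_gauss 3).sub ?_
    simpa using (Stmt6.integrable_pow_gauss 1).const_mul 3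
  have hg3int : Integrable (fun x : ℝ => x^4 - 4*x^2 + 1) Stmt6.γ := by
    refine Integrable.add ((Stmt6.integrable_pow_gauss 4).sub ?_) (integrable_const 1)
    simpa using (Stmt6.integrable_pow_gauss 2).const_mul 4
  have hg1I : ∫ x, (x^2 - 1) ∂Stmt6.γ = 0 := by
    rw [integral_sub (Stmt6.integrable_pow_gauss 2) (integrable_const 1), Stmt6.moment_two]
    simp
  have hg2I : ∫ x, (x^3 - 3*x) ∂Stmt6.γ = 0 := by
    rw [integral_sub (Stmt6.integrable_pow_gauss 3)
      (by simpa using (Stmt6.integrable_pow_gauss 1).const_mul 3),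
      Stmt6.odd_moment 3 (by decide)]
    have : ∫ x, 3 * x ∂Stmt6.γ = 3 * ∫ x, x ∂Stmt6.γ := integral_const_mul 3 _
    rw [this, show ∫ x, x ∂Stmt6.γ = 0 by simpa using Stmt6.odd_moment 1 (by decide)]
    ring
  have h42 : Integrable (fun x : ℝ => x^4 - 4*x^2) Stmt6.γ :=
    (Stmt6.integrable_pow_gauss 4).sub
      (by simpa using (Stmt6.integrable_pow_gauss 2).const_mul 4)
  have hg3I : ∫ x, (x^4 - 4*x^2 + 1) ∂Stmt6.γ = 0 := by
    rw [integral_add h42 (integrable_const 1),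
      integral_sub (Stmt6.integrable_pow_gauss 4)
        (by simpa using (Stmt6.integrable_pow_gauss 2).const_mul 4),
      Stmt6.moment_four]
    have : ∫ x, 4 * x^2 ∂Stmt6.γ = 4 * ∫ x, x^2 ∂Stmt6.γ := integral_const_mul 4 _
    rw [this, Stmt6.moment_two]
    norm_num
  have hαm := Stmt6.alf_measurable A b i
  have hT1int : Integrable (fun z => (fun x : ℝ => x^2 - 1) (z i) * (Stmt6.alf A b i z)^2)
      (Stmt6.μd d) :=
    Stmt6.integrable_eval_mul i hg1m (hαm.pow_const 2) hα2inv hg1int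
      (Stmt6.alf_sq_integrable A b i)
  have hT2int : Integrable (fun z => (fun x : ℝ => x^3 - 3*x) (z i) * (2*β*Stmt6.alf A b i z))
      (Stmt6.μd d) :=
    Stmt6.integrable_eval_mul i hg2m (hαm.const_mul _) hαinv hg2int
      ((Stmt6.alf_integrable A b i).const_mul _)
  have hT3int : Integrable (fun z => (fun x : ℝ => x^4 - 4*x^2 + 1) (z i) * β^2)
      (Stmt6.μd d) :=
    Stmt6.integrable_eval_mul i hg3m measurable_const (fun _ _ => rfl) hg3int
      (integrable_const _)
  have hT1 : ∫ z, (fun x : ℝ => x^2 - 1) (z i) * (Stmt6.alf A b i z)^2 ∂(Stmt6.μd d) = 0 := by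
    rw [Stmt6.integral_eval_mul i hg1m (hαm.pow_const 2) hα2inv, hg1I, zero_mul]
  have hT2 : ∫ z, (fun x : ℝ => x^3 - 3*x) (z i) * (2*β*Stmt6.alf A b i z) ∂(Stmt6.μd d) = 0 := by
    rw [Stmt6.integral_eval_mul i hg2m (hαm.const_mul _) hαinv, hg2I, zero_mul]
  have hT3 : ∫ z, (fun x : ℝ => x^4 - 4*x^2 + 1) (z i) * β^2 ∂(Stmt6.μd d) = 0 := by
    rw [Stmt6.integral_eval_mul i hg3m measurable_const (fun _ _ => rfl), hg3I, zero_mul]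
  have hIRint : Integrable (fun z => (Stmt6.qf A b i z)^2 + β^2) (Stmt6.μd d) :=
    (Stmt6.qf_sq_integrable A b i).add (integrable_const _)
  have hDint : Integrable (fun z => (fun x : ℝ => x^2 - 1) (z i) * (Stmt6.alf A b i z)^2
      + (fun x : ℝ => x^3 - 3*x) (z i) * (2*β*Stmt6.alf A b i z)
      + (fun x : ℝ => x^4 - 4*x^2 + 1) (z i) * β^2) (Stmt6.μd d) :=
    (hT1int.add hT2int).add hT3int
  have hT12int : Integrable (fun z => (fun x : ℝ => x^2 - 1) (z i) * (Stmt6.alf A b i z)^2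
      + (fun x : ℝ => x^3 - 3*x) (z i) * (2*β*Stmt6.alf A b i z)) (Stmt6.μd d) :=
    hT1int.add hT2int
  have hpoint : ∀ z : Fin d → ℝ,
      (z i)^2*(Stmt6.qf A b i z)^2 + (z i)^2*β^2 - 4*(z i)*(Stmt6.qf A b i z)*β
          + (Stmt6.qf A b i z)^2 + 3*β^2
        = 2 * ((Stmt6.qf A b i z)^2 + β^2)
          + ((fun x : ℝ => x^2 - 1) (z i) * (Stmt6.alf A b i z)^2
            + (fun x : ℝ => x^3 - 3*x) (z i) * (2*β*Stmt6.alf A b i z)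
            + (fun x : ℝ => x^4 - 4*x^2 + 1) (z i) * β^2) := by
    intro z
    have hq : Stmt6.qf A b i z = Stmt6.alf A b i z + β * z i := rfl
    rw [hq]
    dsimp only
    ring
  have key : ∫ z, ((z i)^2*(Stmt6.qf A b i z)^2 + (z i)^2*β^2
        - 4*(z i)*(Stmt6.qf A b i z)*β + (Stmt6.qf A b i z)^2 + 3*β^2) ∂(Stmt6.μd d)
      = 2 * ∫ z, ((Stmt6.qf A b i z)^2 + β^2) ∂(Stmt6.μd d) := by
    rw [integral_congr_ae (Filter.Eventually.of_forall hpoint),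
      integral_add (hIRint.const_mul 2) hDint,
      integral_add hT12int hT3int, integral_add hT1int hT2int,
      hT1, hT2, hT3, integral_const_mul]
    ring
  rw [key]
  have hσne : σ2 ≠ 0 := ne_of_gt hσpos
  field_simp
end

section
/- Let f be square-integrable on (0,1)^d with ANOVA decomposition. Then the upper Sobol' index admits the double-integral representation: S̄_i = (1/(2σ²)) ∫_{(0,1)^d} ∫_0^1 (f(z) - f(v_{{i}}, z_{-{i}}))² dv_i dz, where S̄_i = (1/σ²) Σ_{u : i ∈ u} σ_u². -/
open MeasureTheory Finset
open scoped ENNReal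

private lemma integrable_mul_of_memL2 {α : Type*} [MeasurableSpace α] {μ : Measure α}
    {g h : α → ℝ} (hg : MemLp g 2 μ) (hh : MemLp h 2 μ) :
    Integrable (fun x => g x * h x) μ := by
  refine (hg.integrable_sq.add hh.integrable_sq).mono'
    (hg.aestronglyMeasurable.mul hh.aestronglyMeasurable) ?_
  filter_upwards with x
  rw [Real.norm_eq_abs, abs_mul]
  simp only [Pi.add_apply]
  nlinarith [sq_nonneg (|g x| - |h x|), sq_abs (g x), sq_abs (h x),
    abs_nonneg (g x), abs_nonneg (h x)]

private lemma integral_comp_mp {α β : Type*} [MeasurableSpace α] [MeasurableSpace β]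
    {μ : Measure α} {ν : Measure β} {φ : α → β} (hφ : MeasurePreserving φ μ ν)
    {g : β → ℝ} (hg : AEStronglyMeasurable g ν) :
    ∫ x, g (φ x) ∂μ = ∫ y, g y ∂ν := by
  rw [← hφ.map_eq] at hg
  rw [← hφ.map_eq, integral_map hφ.measurable.aemeasurable hg]

private lemma measurePreserving_update_pi {d : ℕ} (ν : Measure ℝ) [IsProbabilityMeasure ν]
    (i : Fin d) :
    MeasurePreserving (fun p : (Fin d → ℝ) × ℝ => Function.update p.1 i p.2)
      ((Measure.pi fun _ : Fin d => ν).prod ν) (Measure.pi fun _ : Fin d => ν) := by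
  refine ⟨measurable_update', ?_⟩
  refine (Measure.pi_eq fun s hs => ?_).symm
  rw [Measure.map_apply measurable_update' (MeasurableSet.univ_pi hs)]
  have hpre : (fun p : (Fin d → ℝ) × ℝ => Function.update p.1 i p.2) ⁻¹' (Set.pi Set.univ s)
      = (Set.pi Set.univ fun j => if j = i then Set.univ else s j) ×ˢ (s i) := by
    ext ⟨z, t⟩
    simp only [Set.mem_preimage, Set.mem_pi, Set.mem_univ, true_implies, Set.mem_prod]
    constructor
    · intro h
      refine ⟨fun j => ?_, by simpa using h i⟩
      by_cases hj : j = i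
      · simp [hj]
      · simpa [hj, Function.update_of_ne hj] using h j
    · rintro ⟨h1, h2⟩ j
      by_cases hj : j = i
      · subst hj; simpa using h2
      · have := h1 j; rw [if_neg hj] at this
        simpa [Function.update_of_ne hj] using this
  rw [hpre, Measure.prod_prod, Measure.pi_pi]
  have h1 : ∀ j : Fin d, ν (if j = i then Set.univ else s j) = if j = i then 1 else ν (s j) := by
    intro j; split_ifs <;> simp
  simp only [h1]
  have e1 : (∏ j : Fin d, if j = i then (1 : ℝ≥0∞) else ν (s j))
      = (if i = i then (1 : ℝ≥0∞) else ν (s i))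
        * ∏ j ∈ Finset.univ.erase i, (if j = i then (1 : ℝ≥0∞) else ν (s j)) :=
    (Finset.mul_prod_erase _ _ (Finset.mem_univ i)).symm
  have e2 : (∏ j : Fin d, ν (s j)) = ν (s i) * ∏ j ∈ Finset.univ.erase i, ν (s j) :=
    (Finset.mul_prod_erase _ _ (Finset.mem_univ i)).symm
  rw [e1, e2, if_pos rfl, one_mul, mul_comm]
  congr 1
  refine Finset.prod_congr rfl fun j hj => ?_
  rw [if_neg (Finset.ne_of_mem_erase hj)]


/-- Sobol' pick-freeze identity for the upper (total) index:
`S̄ᵢ = (1/σ²) ∑_{u ∋ i} σ_u² = (1/(2σ²)) ∬ (f(z) - f(vᵢ, z₋ᵢ))² dvᵢ dz`. -/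
theorem stmt_10 {d : ℕ} (f : (Fin d → ℝ) → ℝ)
    (μ : Measure (Fin d → ℝ))
    (hμ : μ = Measure.pi fun _ : Fin d => volume.restrict (Set.Ioo (0:ℝ) 1))
    (hf : MemLp f 2 μ)
    (F : Finset (Fin d) → (Fin d → ℝ) → ℝ)
    (hFL2 : ∀ u, MemLp (F u) 2 μ)
    (hdecomp : ∀ z, f z = ∑ u : Finset (Fin d), F u z)
    (hdep : ∀ u, ∀ z w : Fin d → ℝ, (∀ i ∈ u, z i = w i) → F u z = F u w)
    (hconst : ∀ z, F ∅ z = ∫ x, f x ∂μ)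
    (hzero : ∀ u, ∀ j ∈ u, ∀ z : Fin d → ℝ,
      (∫ t in Set.Ioo (0:ℝ) 1, F u (Function.update z j t)) = 0)
    (horth : ∀ u v : Finset (Fin d), u ≠ v → (∫ z, F u z * F v z ∂μ) = 0)
    (σ2 : ℝ) (hσ : σ2 = (∫ z, (f z)^2 ∂μ) - (∫ z, f z ∂μ)^2)
    (hσpos : 0 < σ2)
    (i : Fin d) :
    (1 / σ2) * (∑ u ∈ Finset.univ.filter (fun u : Finset (Fin d) => i ∈ u),
        ∫ z, (F u z)^2 ∂μ)
      = (1 / (2 * σ2)) *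
        ∫ z, (∫ t in Set.Ioo (0:ℝ) 1, (f z - f (Function.update z i t))^2) ∂μ := by
  set ν : Measure ℝ := volume.restrict (Set.Ioo (0:ℝ) 1) with hνdef
  haveI hνp : IsProbabilityMeasure ν :=
    ⟨by rw [hνdef, Measure.restrict_apply_univ, Real.volume_Ioo]; norm_num⟩
  haveI hμp : IsProbabilityMeasure μ := by rw [hμ]; infer_instance
  set T : (Fin d → ℝ) × ℝ → (Fin d → ℝ) := fun p => Function.update p.1 i p.2 with hTdef
  have hT : MeasurePreserving T (μ.prod ν) μ := by
    rw [hμ]; exact measurePreserving_update_pi ν i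
  have hfst : MeasurePreserving (Prod.fst : (Fin d → ℝ) × ℝ → Fin d → ℝ) (μ.prod ν) μ :=
    ⟨measurable_fst, by simp [Measure.map_fst_prod]⟩
  have hfP : MemLp (fun p : (Fin d → ℝ) × ℝ => f p.1) 2 (μ.prod ν) :=
    hf.comp_measurePreserving hfst
  have hfT : MemLp (fun p : (Fin d → ℝ) × ℝ => f (T p)) 2 (μ.prod ν) :=
    hf.comp_measurePreserving hT
  have hFP : ∀ u, MemLp (fun p : (Fin d → ℝ) × ℝ => F u p.1) 2 (μ.prod ν) := fun u =>
    (hFL2 u).comp_measurePreserving hfst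
  have hFT : ∀ u, MemLp (fun p : (Fin d → ℝ) × ℝ => F u (T p)) 2 (μ.prod ν) := fun u =>
    (hFL2 u).comp_measurePreserving hT
  -- total variance decomposition
  have hD : (∫ z, (f z)^2 ∂μ) = ∑ u : Finset (Fin d), ∫ z, (F u z)^2 ∂μ := by
    have hexp : ∀ z, (f z)^2 = ∑ u : Finset (Fin d), ∑ v : Finset (Fin d), F u z * F v z := by
      intro z; rw [sq, hdecomp z, Finset.sum_mul_sum]
    simp_rw [hexp]
    rw [integral_finset_sum _ fun u _ =>
      integrable_finset_sum _ fun v _ => integrable_mul_of_memL2 (hFL2 u) (hFL2 v)]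
    refine Finset.sum_congr rfl fun u _ => ?_
    rw [integral_finset_sum _ fun v _ => integrable_mul_of_memL2 (hFL2 u) (hFL2 v),
      Finset.sum_eq_single u (fun v _ hvu => horth u v (Ne.symm hvu)) (by simp)]
    simp_rw [← pow_two]
  -- cross terms
  have hterm0 : ∀ u v : Finset (Fin d), i ∈ v →
      (∫ p, F u p.1 * F v (T p) ∂(μ.prod ν)) = 0 := by
    intro u v hv
    calc (∫ p, F u p.1 * F v (T p) ∂(μ.prod ν))
        = ∫ z, ∫ t, F u z * F v (Function.update z i t) ∂ν ∂μ :=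
          integral_prod _ (integrable_mul_of_memL2 (hFP u) (hFT v))
      _ = 0 := by
          simp_rw [MeasureTheory.integral_const_mul, hzero v i hv, mul_zero, integral_zero]
  have hterm1 : ∀ u v : Finset (Fin d), i ∉ v →
      (∫ p, F u p.1 * F v (T p) ∂(μ.prod ν)) = ∫ z, F u z * F v z ∂μ := by
    intro u v hv
    have heq : ∀ p : (Fin d → ℝ) × ℝ, F v (T p) = F v p.1 := fun p =>
      hdep v _ _ fun j hj => Function.update_of_ne (by rintro rfl; exact hv hj) _ _
    calc (∫ p, F u p.1 * F v (T p) ∂(μ.prod ν))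
        = ∫ p, F u p.1 * F v p.1 ∂(μ.prod ν) := by simp_rw [heq]
      _ = ∫ z, F u z * F v z ∂μ :=
          integral_comp_mp hfst (g := fun z => F u z * F v z)
            (integrable_mul_of_memL2 (hFL2 u) (hFL2 v)).aestronglyMeasurable
  have hC : (∫ p, f p.1 * f (T p) ∂(μ.prod ν))
      = ∑ u ∈ Finset.univ.filter (fun u : Finset (Fin d) => ¬ i ∈ u), ∫ z, (F u z)^2 ∂μ := by
    have hexp : ∀ p : (Fin d → ℝ) × ℝ, f p.1 * f (T p)
        = ∑ u : Finset (Fin d), ∑ v : Finset (Fin d), F u p.1 * F v (T p) := by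
      intro p; rw [hdecomp p.1, hdecomp (T p), Finset.sum_mul_sum]
    simp_rw [hexp]
    rw [integral_finset_sum _ fun u _ => integrable_finset_sum _ fun v _ =>
      integrable_mul_of_memL2 (hFP u) (hFT v)]
    have hstep : ∀ u : Finset (Fin d),
        (∫ p, ∑ v : Finset (Fin d), F u p.1 * F v (T p) ∂(μ.prod ν))
          = if i ∈ u then 0 else ∫ z, (F u z)^2 ∂μ := by
      intro u
      rw [integral_finset_sum _ fun v _ => integrable_mul_of_memL2 (hFP u) (hFT v),
        Finset.sum_eq_single u ?_ (by simp)]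
      · by_cases hu : i ∈ u
        · rw [if_pos hu, hterm0 u u hu]
        · rw [if_neg hu, hterm1 u u hu]; simp_rw [← pow_two]
      · intro v _ hvu
        by_cases hv : i ∈ v
        · exact hterm0 u v hv
        · rw [hterm1 u v hv]; exact horth u v (Ne.symm hvu)
    simp_rw [hstep]
    rw [Finset.sum_ite, Finset.sum_const_zero, zero_add]
  -- expansion of the squared difference
  have hfsub : MemLp (fun p : (Fin d → ℝ) × ℝ => f p.1 - f (T p)) 2 (μ.prod ν) := hfP.sub hfT
  have hIint : Integrable (fun p : (Fin d → ℝ) × ℝ => (f p.1 - f (T p))^2) (μ.prod ν) :=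
    hfsub.integrable_sq
  have e1 : (∫ p, (f p.1)^2 ∂(μ.prod ν)) = ∫ z, (f z)^2 ∂μ :=
    integral_comp_mp hfst (g := fun z => (f z)^2) hf.integrable_sq.aestronglyMeasurable
  have e2 : (∫ p, (f (T p))^2 ∂(μ.prod ν)) = ∫ z, (f z)^2 ∂μ :=
    integral_comp_mp hT (g := fun z => (f z)^2) hf.integrable_sq.aestronglyMeasurable
  have hIexp : (∫ p, (f p.1 - f (T p))^2 ∂(μ.prod ν))
      = ((∫ p, (f p.1)^2 ∂(μ.prod ν)) + (∫ p, (f (T p))^2 ∂(μ.prod ν)))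
        - 2 * ∫ p, f p.1 * f (T p) ∂(μ.prod ν) := by
    have hptw : ∀ p : (Fin d → ℝ) × ℝ, (f p.1 - f (T p))^2
        = ((f p.1)^2 + (f (T p))^2) - 2 * (f p.1 * f (T p)) := fun p => by ring
    simp_rw [hptw]
    have ha : Integrable (fun p : (Fin d → ℝ) × ℝ => (f p.1)^2 + (f (T p))^2) (μ.prod ν) :=
      hfP.integrable_sq.add hfT.integrable_sq
    have hb : Integrable (fun p : (Fin d → ℝ) × ℝ => 2 * (f p.1 * f (T p))) (μ.prod ν) :=
      (integrable_mul_of_memL2 hfP hfT).const_mul 2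
    rw [integral_sub ha hb, integral_add hfP.integrable_sq hfT.integrable_sq,
      MeasureTheory.integral_const_mul]
  have hfub : (∫ z, (∫ t, (f z - f (Function.update z i t))^2 ∂ν) ∂μ)
      = ∫ p, (f p.1 - f (T p))^2 ∂(μ.prod ν) :=
    (integral_prod _ hIint).symm
  have hsplit : (∑ u : Finset (Fin d), ∫ z, (F u z)^2 ∂μ)
      = (∑ u ∈ Finset.univ.filter (fun u : Finset (Fin d) => i ∈ u), ∫ z, (F u z)^2 ∂μ)
        + ∑ u ∈ Finset.univ.filter (fun u : Finset (Fin d) => ¬ i ∈ u), ∫ z, (F u z)^2 ∂μ :=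
    (Finset.sum_filter_add_sum_filter_not Finset.univ _ _).symm
  rw [hfub, hIexp, e1, e2, hC, hD, hsplit]
  have hσne : σ2 ≠ 0 := ne_of_gt hσpos
  field_simp
  ring
end

section
/- Let f be continuously differentiable on (0,1)^d (uniform measure) with square-integrable gradient, and suppose f is linear in the coordinate x_i when the other coordinates are fixed, i.e. ∂f/∂x_i does not depend on x_i. Then S̄_i = v_i/(12σ²), where v_i = ∫_{(0,1)^d} (∂f/∂x_i)² dx is the derivative-based global sensitivity measure (DGSM) and σ² = Var(f). -/
open MeasureTheory Finset

lemma aux_int1 (a : ℝ) : (∫ t in Set.Ioo (0:ℝ) 1, (a - t)^2) = a^2 - a + 1/3 := by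
  rw [← integral_Ioc_eq_integral_Ioo, ← intervalIntegral.integral_of_le zero_le_one]
  have h : ∀ t : ℝ, HasDerivAt (fun t : ℝ => t^3/3 - a*t^2 + a^2*t) ((a - t)^2) t := by
    intro t
    have := (((hasDerivAt_pow 3 t).div_const 3).sub ((hasDerivAt_pow 2 t).const_mul a)).add
      ((hasDerivAt_id t).const_mul (a^2))
    exact this.congr_deriv (by norm_num; ring)
  rw [intervalIntegral.integral_eq_sub_of_hasDerivAt (fun t _ => h t)
    (Continuous.intervalIntegrable (by continuity) _ _)]
  ring

lemma aux_int2 : (∫ t in Set.Ioo (0:ℝ) 1, (t^2 - t + 1/3)) = 1/6 := by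
  rw [← integral_Ioc_eq_integral_Ioo, ← intervalIntegral.integral_of_le zero_le_one]
  have h : ∀ t : ℝ, HasDerivAt (fun t : ℝ => t^3/3 - t^2/2 + t/3) (t^2 - t + 1/3) t := by
    intro t
    have := (((hasDerivAt_pow 3 t).div_const 3).sub ((hasDerivAt_pow 2 t).div_const 2)).add
      ((hasDerivAt_id t).div_const 3)
    exact this.congr_deriv (by norm_num)
  rw [intervalIntegral.integral_eq_sub_of_hasDerivAt (fun t _ => h t)
    (Continuous.intervalIntegrable (by continuity) _ _)]
  norm_num

lemma aux_meas_update {d : ℕ} (i : Fin d) :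
    Measurable (fun p : (Fin d → ℝ) × ℝ => Function.update p.1 i p.2) := by
  apply measurable_pi_iff.2
  intro j
  simp only [Function.update_apply]
  by_cases h : j = i
  · simp [h, measurable_snd]
  · simp [h]
    exact (measurable_pi_apply j).comp measurable_fst

lemma aux_map_update {d : ℕ} (i : Fin d) :
    Measure.map (fun p : (Fin d → ℝ) × ℝ => Function.update p.1 i p.2)
      ((Measure.pi fun _ : Fin d => volume.restrict (Set.Ioo (0:ℝ) 1)).prod
        (volume.restrict (Set.Ioo (0:ℝ) 1)))
      = Measure.pi fun _ : Fin d => volume.restrict (Set.Ioo (0:ℝ) 1) := by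
  set ν : Measure ℝ := volume.restrict (Set.Ioo (0:ℝ) 1) with hν
  have hνuniv : ν Set.univ = 1 := by
    rw [hν, Measure.restrict_apply MeasurableSet.univ, Set.univ_inter, Real.volume_Ioo]
    norm_num
  refine (Measure.pi_eq fun s hs => ?_).symm
  rw [Measure.map_apply (aux_meas_update i) (MeasurableSet.univ_pi hs)]
  have hpre : (fun p : (Fin d → ℝ) × ℝ => Function.update p.1 i p.2) ⁻¹' (Set.univ.pi s)
      = (Set.univ.pi (Function.update s i Set.univ)) ×ˢ (s i) := by
    ext p
    simp only [Set.mem_preimage, Set.mem_pi, Set.mem_univ, forall_true_left, Set.mem_prod]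
    constructor
    · intro h
      refine ⟨fun j => ?_, ?_⟩
      · by_cases hj : j = i
        · subst hj; simp
        · have := h j
          rw [Function.update_of_ne hj] at this
          rwa [Function.update_of_ne hj]
      · have := h i
        rwa [Function.update_self] at this
    · rintro ⟨h1, h2⟩ j
      by_cases hj : j = i
      · subst hj; rwa [Function.update_self]
      · have := h1 j
        rw [Function.update_of_ne hj] at this ⊢
        exact this
  rw [hpre, Measure.prod_prod, Measure.pi_pi]
  have : (fun j => ν (Function.update s i Set.univ j)) = Function.update (fun j => ν (s j)) i 1 := by
    ext j
    by_cases hj : j = i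
    · subst hj; simp [hνuniv]
    · simp [Function.update_of_ne hj]
  calc (∏ j, ν (Function.update s i Set.univ j)) * ν (s i)
      = (∏ j, Function.update (fun j => ν (s j)) i 1 j) * ν (s i) := by rw [this]
    _ = ((1 : ENNReal) * ∏ j ∈ univ \ {i}, ν (s j)) * ν (s i) := by
        rw [Finset.prod_update_of_mem (Finset.mem_univ i)]
    _ = ∏ j, ν (s j) := by
        rw [one_mul]
        exact (Finset.prod_eq_prod_diff_singleton_mul (Finset.mem_univ i) _).symm
/-- If `f` is C¹ on the unit cube and linear in coordinate `i` (its `i`-th partial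
derivative does not depend on `xᵢ`), then `S̄ᵢ = vᵢ/(12σ²)`. -/
theorem stmt_11 {d : ℕ} (f : (Fin d → ℝ) → ℝ)
    (μ : Measure (Fin d → ℝ))
    (hμ : μ = Measure.pi fun _ : Fin d => volume.restrict (Set.Ioo (0:ℝ) 1))
    (hsmooth : ContDiffOn ℝ 1 f (Set.univ.pi fun _ : Fin d => Set.Ioo (0:ℝ) 1))
    (hgrad : ∀ j : Fin d, MemLp (fun z => fderiv ℝ f z (Pi.single j 1)) 2 μ)
    (i : Fin d)
    (hlin : ∀ z ∈ (Set.univ.pi fun _ : Fin d => Set.Ioo (0:ℝ) 1), ∀ t ∈ Set.Ioo (0:ℝ) 1,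
      fderiv ℝ f (Function.update z i t) (Pi.single i 1) = fderiv ℝ f z (Pi.single i 1))
    (σ2 vi : ℝ)
    (hσ : σ2 = (∫ z, (f z)^2 ∂μ) - (∫ z, f z ∂μ)^2)
    (hσpos : 0 < σ2)
    (hv : vi = ∫ z, (fderiv ℝ f z (Pi.single i 1))^2 ∂μ) :
    (1 / (2 * σ2)) * ∫ z, (∫ t in Set.Ioo (0:ℝ) 1, (f z - f (Function.update z i t))^2) ∂μ
      = vi / (12 * σ2) := by
  clear hσ
  haveI : SFinite μ := by rw [hμ]; infer_instance
  set cube : Set (Fin d → ℝ) := Set.univ.pi fun _ : Fin d => Set.Ioo (0:ℝ) 1 with hcube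
  set D : (Fin d → ℝ) → ℝ := fun z => fderiv ℝ f z (Pi.single i 1) with hD
  set R : (Fin d → ℝ) → ℝ := fun z => (D z)^2 * ((z i)^2 - z i + 1/3) with hR
  -- the cube is open
  have hopen : IsOpen cube := isOpen_set_pi Set.finite_univ (fun _ _ => isOpen_Ioo)
  -- a.e. point is in the cube
  have hcube_ae : ∀ᵐ z ∂μ, z ∈ cube := by
    rw [ae_iff]
    have h1 : μ cube = 1 := by
      rw [hμ, hcube, Measure.pi_pi]
      simp [Real.volume_Ioo]
    have h2 : μ Set.univ = 1 := by
      rw [hμ, ← Set.pi_univ Set.univ, Measure.pi_pi]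
      simp [Real.volume_Ioo]
    have : {z | ¬ z ∈ cube} = cubeᶜ := rfl
    rw [this, measure_compl (hopen.measurableSet) (by rw [h1]; exact ENNReal.one_ne_top), h1, h2,
      tsub_self]
  -- membership of updates
  have hupd : ∀ z ∈ cube, ∀ t ∈ Set.Ioo (0:ℝ) 1, Function.update z i t ∈ cube := by
    intro z hz t ht j _
    by_cases hj : j = i
    · subst hj; rwa [Function.update_self]
    · rw [Function.update_of_ne hj]; exact hz j (Set.mem_univ j)
  have hdiff : ∀ x ∈ cube, DifferentiableAt ℝ f x := fun x hx =>
    ((hsmooth.differentiableOn one_ne_zero).differentiableAt (hopen.mem_nhds hx))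
  -- key pointwise identity
  have key : ∀ z ∈ cube, ∀ t ∈ Set.Ioo (0:ℝ) 1,
      f z - f (Function.update z i t) = D z * (z i - t) := by
    intro z hz t ht
    set g : ℝ → ℝ := fun t => f (Function.update z i t) - D z * t with hg
    have hzi : z i ∈ Set.Ioo (0:ℝ) 1 := hz i (Set.mem_univ i)
    have hgderiv : ∀ s ∈ Set.Ioo (0:ℝ) 1, HasDerivAt g 0 s := by
      intro s hs
      have hu : HasDerivAt (fun t : ℝ => Function.update z i t) (Pi.single i 1) s := by
        rw [hasDerivAt_pi]
        intro j
        by_cases hj : j = i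
        · subst hj
          simp only [Function.update_self, Pi.single_eq_same]
          exact hasDerivAt_id s
        · simp only [Function.update_of_ne hj, Pi.single_eq_of_ne hj]
          exact hasDerivAt_const s (z j)
      have hfd := ((hdiff _ (hupd z hz s hs)).hasFDerivAt).comp_hasDerivAt s hu
      have : fderiv ℝ f (Function.update z i s) (Pi.single i 1) = D z := hlin z hz s hs
      rw [this] at hfd
      have := hfd.sub ((hasDerivAt_id s).const_mul (D z))
      simp at this; exact this
    have hgdiff : DifferentiableOn ℝ g (Set.Ioo (0:ℝ) 1) := fun s hs =>
      (hgderiv s hs).differentiableAt.differentiableWithinAt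
    have hg0 : ∀ s ∈ Set.Ioo (0:ℝ) 1, fderivWithin ℝ g (Set.Ioo (0:ℝ) 1) s = 0 := by
      intro s hs
      rw [fderivWithin_of_isOpen isOpen_Ioo hs, (hgderiv s hs).hasFDerivAt.fderiv]
      ext
      simp
    have hconst := (convex_Ioo (0:ℝ) 1).is_const_of_fderivWithin_eq_zero hgdiff hg0 ht hzi
    have hupdself : Function.update z i (z i) = z := Function.update_eq_self i z
    rw [hg] at hconst
    simp only [hupdself] at hconst
    -- hconst : f (update z i t) - D z * t = f z - D z * z i
    linarith [hconst]
  -- the inner integral equals R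
  have hLR : ∀ z ∈ cube, (∫ t in Set.Ioo (0:ℝ) 1, (f z - f (Function.update z i t))^2) = R z := by
    intro z hz
    rw [setIntegral_congr_fun measurableSet_Ioo
      (fun t ht => by rw [key z hz t ht, mul_pow])]
    rw [MeasureTheory.integral_const_mul]
    rw [aux_int1 (z i)]
  have hDmeas : Measurable D := measurable_fderiv_apply_const ℝ f (Pi.single i 1)
  have hRmeas : Measurable R := by
    apply ((hDmeas.pow_const 2).mul ((((measurable_pi_apply i).pow_const 2).sub
      (measurable_pi_apply i)).add measurable_const))
  have hD2int : Integrable (fun z => (D z)^2) μ := (hgrad i).integrable_sq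
  have hRint : Integrable R μ := by
    apply (hD2int.const_mul (1/3)).mono' hRmeas.aestronglyMeasurable
    filter_upwards [hcube_ae] with z hz
    have hzi : z i ∈ Set.Ioo (0:ℝ) 1 := hz i (Set.mem_univ i)
    obtain ⟨h0, h1⟩ := hzi
    have hnn : (0:ℝ) ≤ (z i)^2 - z i + 1/3 := by nlinarith
    have hRz : R z = D z ^ 2 * ((z i)^2 - z i + 1/3) := rfl
    rw [hRz, Real.norm_eq_abs, abs_of_nonneg (by positivity)]
    have hle : (z i)^2 - z i + 1/3 ≤ 1/3 := by nlinarith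
    nlinarith [mul_le_mul_of_nonneg_left hle (sq_nonneg (D z))]
  -- Step: ∫ R dμ = vi / 6
  have hmain : (∫ z, R z ∂μ) = vi / 6 := by
    have hmap := aux_map_update i
    rw [← hμ] at hmap
    set ν : Measure ℝ := volume.restrict (Set.Ioo (0:ℝ) 1) with hν
    set P := μ.prod ν with hP
    have hRae : AEStronglyMeasurable R (Measure.map
        (fun p : (Fin d → ℝ) × ℝ => Function.update p.1 i p.2) P) := by
      rw [hmap]; exact hRmeas.aestronglyMeasurable
    have hRePint : Integrable (fun p : (Fin d → ℝ) × ℝ => R (Function.update p.1 i p.2)) P := by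
      have := (integrable_map_measure hRae (aux_meas_update i).aemeasurable).mp
        (by rw [hmap]; exact hRint)
      exact this
    calc (∫ z, R z ∂μ)
        = ∫ p : (Fin d → ℝ) × ℝ, R (Function.update p.1 i p.2) ∂P := by
          rw [← hmap, integral_map (aux_meas_update i).aemeasurable hRae]
      _ = ∫ z, (∫ t, R (Function.update z i t) ∂ν) ∂μ := MeasureTheory.integral_prod _ hRePint
      _ = ∫ z, (D z)^2 * (1/6) ∂μ := by
          apply integral_congr_ae
          filter_upwards [hcube_ae] with z hz
          have : (∫ t, R (Function.update z i t) ∂ν)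
              = ∫ t in Set.Ioo (0:ℝ) 1, (D z)^2 * (t^2 - t + 1/3) := by
            rw [hν]
            apply setIntegral_congr_fun measurableSet_Ioo
            intro t ht
            have h1 : D (Function.update z i t) = D z := hlin z hz t ht
            simp only [hR, Function.update_self, h1]
          rw [this, MeasureTheory.integral_const_mul, aux_int2]
      _ = (∫ z, (D z)^2 ∂μ) * (1/6) := by rw [integral_mul_const]
      _ = vi / 6 := by rw [← hv]; ring
  -- conclude
  rw [integral_congr_ae (hcube_ae.mono fun z hz => hLR z hz), hmain]
  have hne : σ2 ≠ 0 := ne_of_gt hσpos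
  field_simp
  ring
end

section
/- Let f be continuously differentiable on (0,1)^d with square-integrable partial derivatives, uniform measure, σ² = Var(f) > 0. Then for each i, S̄_i ≤ v_i/(π² σ²), where v_i = ∫_{(0,1)^d} (∂f/∂x_i)² dx. -/
open MeasureTheory Finset Real
open scoped ENNReal



noncomputable def SKw (x : ℝ) : ℝ := Real.sin (π * x)
noncomputable def SKW (x : ℝ) : ℝ := (1 - Real.cos (π * x)) / π
noncomputable def SKV (x : ℝ) : ℝ := x / π - Real.sin (π * x) / π ^ 2

lemma SKw_cont : Continuous SKw := Real.continuous_sin.comp (continuous_const.mul continuous_id)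
lemma SKW_cont : Continuous SKW :=
  ((continuous_const.sub (Real.continuous_cos.comp (continuous_const.mul continuous_id))).div_const _)

lemma hasDerivAt_SKW (x : ℝ) : HasDerivAt SKW (SKw x) x := by
  have h1 : HasDerivAt (fun x : ℝ => π * x) π x := by
    simpa using (hasDerivAt_id x).const_mul π
  have h2 : HasDerivAt (fun x : ℝ => Real.cos (π * x)) (-Real.sin (π * x) * π) x :=
    (Real.hasDerivAt_cos (π * x)).comp x h1
  have h3 := ((hasDerivAt_const x (1:ℝ)).sub h2).div_const π
  refine h3.congr_deriv ?_
  simp only [SKw, zero_sub, neg_mul, neg_neg]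
  rw [mul_div_cancel_right₀ _ Real.pi_ne_zero]

lemma hasDerivAt_SKV (x : ℝ) : HasDerivAt SKV (SKW x) x := by
  have h1 : HasDerivAt (fun x : ℝ => π * x) π x := by
    simpa using (hasDerivAt_id x).const_mul π
  have h2 : HasDerivAt (fun x : ℝ => Real.sin (π * x)) (Real.cos (π * x) * π) x :=
    (Real.hasDerivAt_sin (π * x)).comp x h1
  have h3 := (((hasDerivAt_id x).div_const π).sub (h2.div_const (π^2)))
  refine h3.congr_deriv ?_
  have hπ : (π:ℝ) ≠ 0 := Real.pi_ne_zero
  simp only [SKW]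
  rw [div_sub_div _ _ hπ (pow_ne_zero 2 hπ), div_eq_div_iff (mul_ne_zero hπ (pow_ne_zero 2 hπ)) hπ]
  ring

lemma SKw_pos {x : ℝ} (hx : x ∈ Set.Ioo (0:ℝ) 1) : 0 < SKw x :=
  Real.sin_pos_of_pos_of_lt_pi (by nlinarith [Real.pi_pos, hx.1]) (by nlinarith [Real.pi_pos, hx.2])

lemma SKW_mono {a b : ℝ} (ha : 0 ≤ a) (hab : a ≤ b) (hb : b ≤ 1) : SKW a ≤ SKW b := by
  have h := Real.cos_le_cos_of_nonneg_of_le_pi (x := π * a) (y := π * b)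
    (by positivity) (by nlinarith [Real.pi_pos]) (by nlinarith [Real.pi_pos])
  have := Real.pi_pos
  unfold SKW
  have hπ := Real.pi_pos
  exact (div_le_div_iff_of_pos_right hπ).mpr (by linarith)


lemma integral_SKw (t s : ℝ) : ∫ x in t..s, SKw x = SKW s - SKW t :=
  intervalIntegral.integral_eq_sub_of_hasDerivAt (fun x _ => hasDerivAt_SKW x)
    (SKw_cont.intervalIntegrable _ _)

lemma integral_SKW' (t s : ℝ) : ∫ x in t..s, SKW x = SKV s - SKV t :=
  intervalIntegral.integral_eq_sub_of_hasDerivAt (fun x _ => hasDerivAt_SKV x)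
    (SKW_cont.intervalIntegrable _ _)

lemma SKV_zero : SKV 0 = 0 := by simp [SKV]
lemma SKV_one : SKV 1 = 1 / π := by simp [SKV]

lemma sk_cs {g g' : ℝ → ℝ} (hg'm : Measurable g')
    (hderiv : ∀ x ∈ Set.Ioo (0:ℝ) 1, HasDerivAt g (g' x) x)
    (hcont : ContinuousOn g' (Set.Ioo (0:ℝ) 1))
    {t s : ℝ} (ht : 0 < t) (hts : t < s) (hs : s < 1) :
    ENNReal.ofReal ((g s - g t)^2) ≤
      ENNReal.ofReal (SKW s - SKW t) * ∫⁻ x in Set.Ioo t s, ENNReal.ofReal (g' x ^ 2 / SKw x) := by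
  have hsub : Set.uIcc t s ⊆ Set.Ioo (0:ℝ) 1 := by
    rw [Set.uIcc_of_le hts.le]
    exact fun x hx => ⟨lt_of_lt_of_le ht hx.1, lt_of_le_of_lt hx.2 hs⟩
  have hcont' : ContinuousOn g' (Set.uIcc t s) := hcont.mono hsub
  -- FTC
  have hftc : g s - g t = ∫ x in t..s, g' x :=
    (intervalIntegral.integral_eq_sub_of_hasDerivAt
      (fun x hx => hderiv x (hsub hx)) (hcont'.intervalIntegrable)).symm
  have habs : |g s - g t| ≤ ∫ x in Set.Ioo t s, |g' x| := by
    rw [hftc, ← integral_Ioc_eq_integral_Ioo, ← intervalIntegral.integral_of_le hts.le]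
    exact intervalIntegral.abs_integral_le_integral_abs hts.le
  have hIoosub : Set.Ioo t s ⊆ Set.Ioo (0:ℝ) 1 := by
    rw [Set.uIcc_of_le hts.le] at hsub
    exact (Set.Ioo_subset_Icc_self).trans hsub
  have habs_int : IntegrableOn (fun x => |g' x|) (Set.Ioo t s) := by
    refine ((hcont.mono ?_).abs.integrableOn_compact isCompact_Icc).mono_set Set.Ioo_subset_Icc_self
    rw [Set.uIcc_of_le hts.le] at hsub; exact hsub
  -- pass to lintegral
  have h1 : ENNReal.ofReal ((g s - g t)^2) ≤ (∫⁻ x in Set.Ioo t s, ENNReal.ofReal |g' x|) ^ 2 := by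
    rw [← ofReal_integral_eq_lintegral_ofReal habs_int
      (Filter.Eventually.of_forall fun x => abs_nonneg _), ← sq_abs,
      ENNReal.ofReal_pow (abs_nonneg _)]
    exact pow_le_pow_left₀ (by simp) (ENNReal.ofReal_le_ofReal habs) 2
  -- Hölder in ENNReal
  have key : (∫⁻ x in Set.Ioo t s, ENNReal.ofReal |g' x|) ≤
      (∫⁻ x in Set.Ioo t s, ENNReal.ofReal (SKw x)) ^ (1/2 : ℝ) *
      (∫⁻ x in Set.Ioo t s, ENNReal.ofReal (g' x ^2 / SKw x)) ^ (1/2 : ℝ) := by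
    have hpq : (2:ℝ).HolderConjugate 2 := Real.HolderConjugate.two_two
    have := ENNReal.lintegral_mul_le_Lp_mul_Lq (volume.restrict (Set.Ioo t s)) hpq
      (f := fun x => ENNReal.ofReal (Real.sqrt (SKw x)))
      (g := fun x => ENNReal.ofReal (|g' x| / Real.sqrt (SKw x)))
      ((Real.continuous_sqrt.comp SKw_cont).measurable.ennreal_ofReal.aemeasurable)
      ((hg'm.abs.div (Real.continuous_sqrt.comp SKw_cont).measurable).ennreal_ofReal.aemeasurable)
    refine le_trans (le_of_eq ?_) (this.trans (le_of_eq ?_))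
    · apply lintegral_congr_ae
      filter_upwards [ae_restrict_mem measurableSet_Ioo] with x hx
      have hw := SKw_pos (hIoosub hx)
      have hsq : Real.sqrt (SKw x) > 0 := Real.sqrt_pos.mpr hw
      simp only [Pi.mul_apply]
      rw [← ENNReal.ofReal_mul (Real.sqrt_nonneg _)]
      congr 1
      field_simp
    · congr 1
      · congr 1
        apply lintegral_congr_ae
        filter_upwards [ae_restrict_mem measurableSet_Ioo] with x hx
        have hw := SKw_pos (hIoosub hx)
        rw [ENNReal.ofReal_rpow_of_nonneg (Real.sqrt_nonneg _) (by norm_num), Real.rpow_two,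
          Real.sq_sqrt hw.le]
      · congr 1
        apply lintegral_congr_ae
        filter_upwards [ae_restrict_mem measurableSet_Ioo] with x hx
        have hw := SKw_pos (hIoosub hx)
        rw [ENNReal.ofReal_rpow_of_nonneg (by positivity) (by norm_num), Real.rpow_two]
        congr 1
        rw [div_pow, sq_abs, Real.sq_sqrt hw.le]
  have hw_int : (∫⁻ x in Set.Ioo t s, ENNReal.ofReal (SKw x)) = ENNReal.ofReal (SKW s - SKW t) := by
    rw [← ofReal_integral_eq_lintegral_ofReal
      ((SKw_cont.continuousOn.integrableOn_compact isCompact_Icc).mono_set Set.Ioo_subset_Icc_self)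
      ((ae_restrict_mem measurableSet_Ioo).mono fun x hx => (SKw_pos (hIoosub hx)).le)]
    congr 1
    rw [← integral_Ioc_eq_integral_Ioo, ← intervalIntegral.integral_of_le hts.le, integral_SKw]
  calc ENNReal.ofReal ((g s - g t)^2)
      ≤ (∫⁻ x in Set.Ioo t s, ENNReal.ofReal |g' x|) ^ 2 := h1
    _ ≤ ((∫⁻ x in Set.Ioo t s, ENNReal.ofReal (SKw x)) ^ (1/2 : ℝ) *
        (∫⁻ x in Set.Ioo t s, ENNReal.ofReal (g' x ^2 / SKw x)) ^ (1/2 : ℝ)) ^ 2 :=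
        pow_le_pow_left₀ (by simp) key 2
    _ = (∫⁻ x in Set.Ioo t s, ENNReal.ofReal (SKw x)) *
        (∫⁻ x in Set.Ioo t s, ENNReal.ofReal (g' x ^2 / SKw x)) := by
        rw [mul_pow, ← ENNReal.rpow_natCast (_ ^ (1/2:ℝ)) 2, ← ENNReal.rpow_natCast (_ ^ (1/2:ℝ)) 2,
          ← ENNReal.rpow_mul, ← ENNReal.rpow_mul]
        norm_num
    _ = ENNReal.ofReal (SKW s - SKW t) * ∫⁻ x in Set.Ioo t s, ENNReal.ofReal (g' x ^2 / SKw x) := by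
        rw [hw_int]

lemma SKW_bound (y : ℝ) : |SKW y| ≤ 2 / π := by
  have hπ := Real.pi_pos
  rw [SKW, abs_div, abs_of_pos hπ]
  rw [div_le_div_iff_of_pos_right hπ]
  have h1 := Real.neg_one_le_cos (π * y)
  have h2 := Real.cos_le_one (π * y)
  rw [abs_le]
  constructor <;> nlinarith

lemma keyC_inner {s x : ℝ} (hs : s ∈ Set.Ioo (0:ℝ) 1) (hx : x ∈ Set.Ioo (0:ℝ) 1) :
    (∫⁻ t in Set.Ioo (0:ℝ) 1,
      (if min t s < x ∧ x < max t s then ENNReal.ofReal |SKW s - SKW t| else 0))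
    = ENNReal.ofReal (if x < s then x * SKW s - SKV x
        else if s < x then (SKV 1 - SKV x) - (1 - x) * SKW s else 0) := by
  rcases lt_trichotomy x s with hxs | hxs | hxs
  · -- x < s : t-condition is t < x
    have hcond : ∀ t : ℝ, (min t s < x ∧ x < max t s) ↔ t < x := by
      intro t
      constructor
      · rintro ⟨h1, -⟩
        rcases min_lt_iff.mp h1 with h | h
        · exact h
        · exact absurd h (not_lt.mpr hxs.le)
      · exact fun h => ⟨min_lt_iff.mpr (Or.inl h), lt_max_iff.mpr (Or.inr hxs)⟩
    have hset : Set.Iio x ∩ Set.Ioo (0:ℝ) 1 = Set.Ioo 0 x := by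
      ext t
      constructor
      · rintro ⟨h1, h2, -⟩; exact ⟨h2, h1⟩
      · rintro ⟨h1, h2⟩; exact ⟨h2, h1, h2.trans (hxs.trans hs.2)⟩
    calc (∫⁻ t in Set.Ioo (0:ℝ) 1,
          (if min t s < x ∧ x < max t s then ENNReal.ofReal |SKW s - SKW t| else 0))
        = ∫⁻ t in Set.Ioo (0:ℝ) 1,
            (Set.Iio x).indicator (fun t => ENNReal.ofReal |SKW s - SKW t|) t := by
          apply lintegral_congr fun t => ?_
          simp only [Set.indicator_apply, Set.mem_Iio]
          by_cases h : t < x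
          · rw [if_pos ((hcond t).mpr h), if_pos h]
          · rw [if_neg fun hc => h ((hcond t).mp hc), if_neg h]
      _ = ∫⁻ t in Set.Ioo (0:ℝ) x, ENNReal.ofReal |SKW s - SKW t| := by
          rw [lintegral_indicator measurableSet_Iio, Measure.restrict_restrict measurableSet_Iio,
            hset]
      _ = ∫⁻ t in Set.Ioo (0:ℝ) x, ENNReal.ofReal (SKW s - SKW t) := by
          apply lintegral_congr_ae
          filter_upwards [ae_restrict_mem measurableSet_Ioo] with t ht
          rw [abs_of_nonneg (sub_nonneg.mpr (SKW_mono ht.1.le (ht.2.le.trans hxs.le) hs.2.le))]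
      _ = ENNReal.ofReal (∫ t in Set.Ioo (0:ℝ) x, (SKW s - SKW t)) := by
          rw [ofReal_integral_eq_lintegral_ofReal]
          · exact ((continuous_const.sub SKW_cont).continuousOn.integrableOn_compact
              isCompact_Icc).mono_set Set.Ioo_subset_Icc_self
          · filter_upwards [ae_restrict_mem measurableSet_Ioo] with t ht
            exact sub_nonneg.mpr (SKW_mono ht.1.le (ht.2.le.trans hxs.le) hs.2.le)
      _ = ENNReal.ofReal (if x < s then x * SKW s - SKV x
            else if s < x then (SKV 1 - SKV x) - (1 - x) * SKW s else 0) := by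
          rw [if_pos hxs]
          congr 1
          rw [← integral_Ioc_eq_integral_Ioo, ← intervalIntegral.integral_of_le hx.1.le,
            intervalIntegral.integral_sub intervalIntegrable_const
              (SKW_cont.intervalIntegrable _ _),
            intervalIntegral.integral_const, integral_SKW', SKV_zero]
          simp [smul_eq_mul]
  · -- x = s : integrand vanishes
    subst hxs
    rw [if_neg (lt_irrefl x), if_neg (lt_irrefl x)]
    rw [ENNReal.ofReal_zero]
    apply lintegral_eq_zero_iff ?_ |>.mpr ?_
    · apply Measurable.ite ?_ ?_ measurable_const
      · exact (measurableSet_lt ((measurable_id.min measurable_const)) measurable_const).inter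
          (measurableSet_lt measurable_const ((measurable_id.max measurable_const)))
      · exact (ENNReal.measurable_ofReal.comp ((SKW_cont.measurable.comp measurable_const).sub
          (SKW_cont.measurable)).abs)
    · apply Filter.Eventually.of_forall fun t => ?_
      simp only [Pi.zero_apply]
      rw [if_neg]
      rintro ⟨h1, h2⟩
      rcases le_or_gt t x with h | h
      · rw [max_eq_right h] at h2; exact lt_irrefl x h2
      · rw [min_eq_right h.le] at h1; exact lt_irrefl x h1
  · -- s < x : t-condition is x < t
    have hcond : ∀ t : ℝ, (min t s < x ∧ x < max t s) ↔ x < t := by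
      intro t
      constructor
      · rintro ⟨-, h2⟩
        rcases lt_max_iff.mp h2 with h | h
        · exact h
        · exact absurd h (not_lt.mpr hxs.le)
      · exact fun h => ⟨min_lt_iff.mpr (Or.inr hxs), lt_max_iff.mpr (Or.inl h)⟩
    have hset : Set.Ioi x ∩ Set.Ioo (0:ℝ) 1 = Set.Ioo x 1 := by
      ext t
      constructor
      · rintro ⟨h1, -, h2⟩; exact ⟨h1, h2⟩
      · rintro ⟨h1, h2⟩; exact ⟨h1, hx.1.trans h1, h2⟩
    calc (∫⁻ t in Set.Ioo (0:ℝ) 1,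
          (if min t s < x ∧ x < max t s then ENNReal.ofReal |SKW s - SKW t| else 0))
        = ∫⁻ t in Set.Ioo (0:ℝ) 1,
            (Set.Ioi x).indicator (fun t => ENNReal.ofReal |SKW s - SKW t|) t := by
          apply lintegral_congr fun t => ?_
          simp only [Set.indicator_apply, Set.mem_Ioi]
          by_cases h : x < t
          · rw [if_pos ((hcond t).mpr h), if_pos h]
          · rw [if_neg fun hc => h ((hcond t).mp hc), if_neg h]
      _ = ∫⁻ t in Set.Ioo x 1, ENNReal.ofReal |SKW s - SKW t| := by
          rw [lintegral_indicator measurableSet_Ioi, Measure.restrict_restrict measurableSet_Ioi,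
            hset]
      _ = ∫⁻ t in Set.Ioo x 1, ENNReal.ofReal (SKW t - SKW s) := by
          apply lintegral_congr_ae
          filter_upwards [ae_restrict_mem measurableSet_Ioo] with t ht
          rw [abs_sub_comm,
            abs_of_nonneg (sub_nonneg.mpr (SKW_mono hs.1.le (hxs.le.trans ht.1.le) ht.2.le))]
      _ = ENNReal.ofReal (∫ t in Set.Ioo x 1, (SKW t - SKW s)) := by
          rw [ofReal_integral_eq_lintegral_ofReal]
          · exact ((SKW_cont.sub continuous_const).continuousOn.integrableOn_compact
              isCompact_Icc).mono_set Set.Ioo_subset_Icc_self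
          · filter_upwards [ae_restrict_mem measurableSet_Ioo] with t ht
            exact sub_nonneg.mpr (SKW_mono hs.1.le (hxs.le.trans ht.1.le) ht.2.le)
      _ = ENNReal.ofReal (if x < s then x * SKW s - SKV x
            else if s < x then (SKV 1 - SKV x) - (1 - x) * SKW s else 0) := by
          rw [if_neg (not_lt.mpr hxs.le), if_pos hxs]
          congr 1
          rw [← integral_Ioc_eq_integral_Ioo, ← intervalIntegral.integral_of_le hx.2.le,
            intervalIntegral.integral_sub (SKW_cont.intervalIntegrable _ _)
              intervalIntegrable_const,
            intervalIntegral.integral_const, integral_SKW']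
          simp only [smul_eq_mul]

-- nonnegativity of the two branch values
lemma branch1_nonneg {s x : ℝ} (hx0 : 0 ≤ x) (hxs : x ≤ s) (hs1 : s ≤ 1) :
    0 ≤ x * SKW s - SKV x := by
  have h : ∫ t in (0:ℝ)..x, SKW t ≤ ∫ _t in (0:ℝ)..x, SKW s :=
    intervalIntegral.integral_mono_on hx0 (SKW_cont.intervalIntegrable _ _)
      intervalIntegrable_const
      (fun t ht => SKW_mono ht.1 (ht.2.trans hxs) hs1)
  rw [integral_SKW', SKV_zero, intervalIntegral.integral_const, smul_eq_mul] at h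
  linarith

lemma branch2_nonneg {s x : ℝ} (hs0 : 0 ≤ s) (hsx : s ≤ x) (hx1 : x ≤ 1) :
    0 ≤ (SKV 1 - SKV x) - (1 - x) * SKW s := by
  have h : ∫ _t in x..(1:ℝ), SKW s ≤ ∫ t in x..(1:ℝ), SKW t :=
    intervalIntegral.integral_mono_on hx1 intervalIntegrable_const
      (SKW_cont.intervalIntegrable _ _)
      (fun t ht => SKW_mono hs0 (hsx.trans ht.1) ht.2)
  rw [integral_SKW', intervalIntegral.integral_const, smul_eq_mul] at h
  linarith

lemma keyC {x : ℝ} (hx : x ∈ Set.Ioo (0:ℝ) 1) :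
    (∫⁻ s in Set.Ioo (0:ℝ) 1, ∫⁻ t in Set.Ioo (0:ℝ) 1,
      (if min t s < x ∧ x < max t s then ENNReal.ofReal |SKW s - SKW t| else 0))
    = ENNReal.ofReal (2 * Real.sin (π * x) / π ^ 2) := by
  set r : ℝ → ℝ := fun s => if x < s then x * SKW s - SKV x
      else if s < x then (SKV 1 - SKV x) - (1 - x) * SKW s else 0 with hr
  have hrm : Measurable r := by
    apply Measurable.ite (measurableSet_lt measurable_const measurable_id)
      ((measurable_const.mul SKW_cont.measurable).sub measurable_const)
    exact Measurable.ite (measurableSet_lt measurable_id measurable_const)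
      (measurable_const.sub (measurable_const.mul SKW_cont.measurable)) measurable_const
  have hrnn : ∀ s ∈ Set.Ioo (0:ℝ) 1, 0 ≤ r s := by
    intro s hs
    rw [hr]
    dsimp only
    split_ifs with h1 h2
    · exact branch1_nonneg hx.1.le h1.le hs.2.le
    · exact branch2_nonneg hs.1.le h2.le hx.2.le
    · exact le_refl 0
  have hC : ∀ s : ℝ, |r s| ≤ 2 / π + |SKV x| + (|SKV 1| + 2 / π) := by
    intro s
    have h1 : |x| ≤ 1 := by rw [abs_of_pos hx.1]; exact hx.2.le
    have h2 := abs_le.mp (SKW_bound s)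
    have h3 := neg_abs_le (SKV x)
    have h4 := le_abs_self (SKV x)
    have h5 := neg_abs_le (SKV 1)
    have h6 := le_abs_self (SKV 1)
    have hπ := Real.pi_pos
    have h7 : 0 < 2 / π := by positivity
    rw [hr]
    dsimp only
    split_ifs with hb1 hb2
    · rw [abs_le]; constructor <;> nlinarith [hx.1, hx.2]
    · rw [abs_le]; constructor <;> nlinarith [hx.1, hx.2]
    · rw [abs_zero]; positivity
  have hint : IntegrableOn r (Set.Ioo (0:ℝ) 1) := by
    apply Measure.integrableOn_of_bounded (M := 2 / π + |SKV x| + (|SKV 1| + 2 / π))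
    · rw [Real.volume_Ioo]; exact ENNReal.ofReal_ne_top
    · exact hrm.aestronglyMeasurable
    · exact Filter.Eventually.of_forall fun s => hC s
  -- identify the double integral with the integral of r
  have step1 : (∫⁻ s in Set.Ioo (0:ℝ) 1, ∫⁻ t in Set.Ioo (0:ℝ) 1,
      (if min t s < x ∧ x < max t s then ENNReal.ofReal |SKW s - SKW t| else 0))
      = ∫⁻ s in Set.Ioo (0:ℝ) 1, ENNReal.ofReal (r s) := by
    apply lintegral_congr_ae
    filter_upwards [ae_restrict_mem measurableSet_Ioo] with s hs
    exact keyC_inner hs hx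
  rw [step1, ← ofReal_integral_eq_lintegral_ofReal hint
    ((ae_restrict_mem measurableSet_Ioo).mono fun s hs => hrnn s hs)]
  -- now compute the real integral
  have hne : ∀ᵐ s : ℝ, s ≠ x := by
    rw [ae_iff]
    simpa using measure_singleton (α := ℝ) x
  have hi1 : IntervalIntegrable r volume 0 x := by
    rw [intervalIntegrable_iff_integrableOn_Ioc_of_le hx.1.le]
    exact hint.mono_set fun t ht => ⟨ht.1, ht.2.trans_lt hx.2⟩
  have hi2 : IntervalIntegrable r volume x 1 := by
    rw [intervalIntegrable_iff_integrableOn_Ioc_of_le hx.2.le,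
      integrableOn_Ioc_iff_integrableOn_Ioo]
    exact hint.mono_set fun t ht => ⟨hx.1.trans ht.1, ht.2⟩
  have hsplit : ∫ s in Set.Ioo (0:ℝ) 1, r s = (∫ s in (0:ℝ)..x, r s) + ∫ s in x..(1:ℝ), r s := by
    rw [← integral_Ioc_eq_integral_Ioo, ← intervalIntegral.integral_of_le zero_le_one,
      intervalIntegral.integral_add_adjacent_intervals hi1 hi2]
  have hI1 : ∫ s in (0:ℝ)..x, r s = x * (SKV 1 - SKV x) - (1 - x) * SKV x := by
    have : ∫ s in (0:ℝ)..x, r s = ∫ s in (0:ℝ)..x, ((SKV 1 - SKV x) - (1 - x) * SKW s) := by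
      apply intervalIntegral.integral_congr_ae
      filter_upwards [hne] with s hsne hs
      rw [Set.uIoc_of_le hx.1.le] at hs
      rw [hr]
      dsimp only
      rw [if_neg (not_lt.mpr (hs.2.lt_of_ne hsne).le), if_pos (hs.2.lt_of_ne hsne)]
    rw [this, intervalIntegral.integral_sub intervalIntegrable_const
      ((SKW_cont.intervalIntegrable _ _).const_mul _),
      intervalIntegral.integral_const, intervalIntegral.integral_const_mul, integral_SKW',
      SKV_zero, smul_eq_mul]
    ring
  have hI2 : ∫ s in x..(1:ℝ), r s = x * (SKV 1 - SKV x) - (1 - x) * SKV x := by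
    have : ∫ s in x..(1:ℝ), r s = ∫ s in x..(1:ℝ), (x * SKW s - SKV x) := by
      apply intervalIntegral.integral_congr_ae
      filter_upwards [hne] with s hsne hs
      rw [Set.uIoc_of_le hx.2.le] at hs
      rw [hr]
      dsimp only
      rw [if_pos hs.1]
    rw [this, intervalIntegral.integral_sub ((SKW_cont.intervalIntegrable _ _).const_mul _)
      intervalIntegrable_const,
      intervalIntegral.integral_const, intervalIntegral.integral_const_mul, integral_SKW',
      smul_eq_mul]
  rw [hsplit, hI1, hI2]
  congr 1
  rw [SKV_one]
  simp only [SKV]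
  have hπ := Real.pi_ne_zero
  field_simp
  ring

lemma Kmeas {α : Type*} [MeasurableSpace α] {fs ft fx : α → ℝ}
    (hs : Measurable fs) (ht : Measurable ft) (hx : Measurable fx) :
    Measurable (fun p =>
      if min (ft p) (fs p) < fx p ∧ fx p < max (ft p) (fs p)
      then ENNReal.ofReal |SKW (fs p) - SKW (ft p)| else 0) :=
  Measurable.ite ((measurableSet_lt (ht.min hs) hx).inter (measurableSet_lt hx (ht.max hs)))
    ((SKW_cont.measurable.comp hs).sub (SKW_cont.measurable.comp ht)).abs.ennreal_ofReal
    measurable_const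

lemma oneDim {g g' : ℝ → ℝ} (hg'm : Measurable g')
    (hderiv : ∀ x ∈ Set.Ioo (0:ℝ) 1, HasDerivAt g (g' x) x)
    (hcont : ContinuousOn g' (Set.Ioo (0:ℝ) 1)) :
    (∫⁻ s in Set.Ioo (0:ℝ) 1, ∫⁻ t in Set.Ioo (0:ℝ) 1, ENNReal.ofReal ((g s - g t)^2))
      ≤ ENNReal.ofReal (2 / π^2) * ∫⁻ x in Set.Ioo (0:ℝ) 1, ENNReal.ofReal (g' x ^ 2) := by
  set I : Set ℝ := Set.Ioo (0:ℝ) 1 with hI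
  set G : ℝ → ℝ≥0∞ := fun x => ENNReal.ofReal (g' x ^ 2 / SKw x) with hG
  have hGm : Measurable G := (hg'm.pow_const 2 |>.div SKw_cont.measurable).ennreal_ofReal
  have hGlt : ∀ x, G x ≠ ∞ := fun x => ENNReal.ofReal_ne_top
  set K : ℝ → ℝ → ℝ → ℝ≥0∞ := fun s t x =>
    if min t s < x ∧ x < max t s then ENNReal.ofReal |SKW s - SKW t| else 0 with hK
  have hKne : ∀ s t x, K s t x ≠ ∞ := by
    intro s t x; rw [hK]; dsimp only; split_ifs
    · exact ENNReal.ofReal_ne_top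
    · exact ENNReal.zero_ne_top
  -- Step 1 : pointwise bound
  have step1 : (∫⁻ s in I, ∫⁻ t in I, ENNReal.ofReal ((g s - g t)^2))
      ≤ ∫⁻ s in I, ∫⁻ t in I, ∫⁻ x in I, K s t x * G x := by
    apply lintegral_mono_ae
    filter_upwards [ae_restrict_mem measurableSet_Ioo] with s hs
    apply lintegral_mono_ae
    filter_upwards [ae_restrict_mem measurableSet_Ioo] with t ht
    have haux : ∀ u v : ℝ, u ∈ I → v ∈ I → u < v →
        ENNReal.ofReal ((g v - g u)^2) ≤ ∫⁻ x in I, K v u x * G x := by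
      intro u v hu hv huv
      have hIoosub : Set.Ioo u v ⊆ I := fun x hx => ⟨hu.1.trans hx.1, hx.2.trans hv.2⟩
      have heq : (∫⁻ x in I, K v u x * G x)
          = ENNReal.ofReal (SKW v - SKW u) * ∫⁻ x in Set.Ioo u v, G x := by
        have h1 : ∀ x, K v u x * G x
            = (Set.Ioo u v).indicator (fun x => ENNReal.ofReal |SKW v - SKW u| * G x) x := by
          intro x
          rw [hK]
          simp only [Set.indicator_apply, Set.mem_Ioo, min_eq_left huv.le, max_eq_right huv.le,
            ite_mul, zero_mul]
        simp_rw [h1]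
        rw [lintegral_indicator measurableSet_Ioo, Measure.restrict_restrict measurableSet_Ioo,
          Set.inter_eq_self_of_subset_left hIoosub,
          lintegral_const_mul' _ _ ENNReal.ofReal_ne_top,
          abs_of_nonneg (sub_nonneg.mpr (SKW_mono hu.1.le huv.le hv.2.le))]
      rw [heq]
      exact sk_cs hg'm hderiv hcont hu.1 huv hv.2
    rcases lt_trichotomy t s with hts | hts | hts
    · exact haux t s ht hs hts
    · subst hts
      simp
    · have : (g s - g t)^2 = (g t - g s)^2 := by ring
      rw [this]
      refine (haux s t hs ht hts).trans (le_of_eq ?_)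
      apply lintegral_congr fun x => ?_
      rw [hK]
      simp only [min_comm, max_comm, abs_sub_comm]
  -- Step 2/3 : Tonelli swaps
  have hswap : (∫⁻ s in I, ∫⁻ t in I, ∫⁻ x in I, K s t x * G x)
      = ∫⁻ x in I, ∫⁻ s in I, ∫⁻ t in I, K s t x * G x := by
    have h1 : ∀ s : ℝ, (∫⁻ t in I, ∫⁻ x in I, K s t x * G x)
        = ∫⁻ x in I, ∫⁻ t in I, K s t x * G x := by
      intro s
      apply lintegral_lintegral_swap
      exact ((Kmeas measurable_const measurable_fst measurable_snd).mul
        (hGm.comp measurable_snd)).aemeasurable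
    simp_rw [h1]
    apply lintegral_lintegral_swap
    apply Measurable.aemeasurable
    apply Measurable.lintegral_prod_right (f := fun (p : ℝ × ℝ) t => K p.1 t p.2 * G p.2)
    exact ((Kmeas (measurable_fst.comp measurable_fst) measurable_snd
        (measurable_snd.comp measurable_fst)).mul
      (hGm.comp (measurable_snd.comp measurable_fst)))
  -- Step 4/5 : compute the x-sections
  have step45 : (∫⁻ x in I, ∫⁻ s in I, ∫⁻ t in I, K s t x * G x)
      = ∫⁻ x in I, ENNReal.ofReal (2 / π^2) * ENNReal.ofReal (g' x ^ 2) := by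
    apply lintegral_congr_ae
    filter_upwards [ae_restrict_mem measurableSet_Ioo] with x hx
    have h1 : ∀ s : ℝ, (∫⁻ t in I, K s t x * G x) = (∫⁻ t in I, K s t x) * G x := by
      intro s
      exact lintegral_mul_const' _ _ (hGlt x)
    simp_rw [h1]
    rw [lintegral_mul_const' _ _ (hGlt x), keyC hx, hG]
    dsimp only
    have hw := SKw_pos hx
    rw [SKw] at hw
    have h1 : (0:ℝ) ≤ 2 * Real.sin (π * x) / π ^ 2 := div_nonneg (by nlinarith [hw]) (by positivity)
    rw [← ENNReal.ofReal_mul h1, ← ENNReal.ofReal_mul (by positivity : (0:ℝ) ≤ 2 / π^2)]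
    congr 1
    rw [SKw]
    field_simp
  refine step1.trans (le_of_eq ?_)
  rw [hswap, step45, lintegral_const_mul' _ _ ENNReal.ofReal_ne_top]


lemma sk_indicator_meas {α : Type*} [TopologicalSpace α] [MeasurableSpace α]
    [OpensMeasurableSpace α] {f : α → ℝ} {s : Set α} (hs : IsOpen s)
    (hf : ContinuousOn f s) : Measurable (s.indicator f) := by
  have h : StronglyMeasurable (s.indicator f) := by
    apply stronglyMeasurable_of_restrict_of_restrict_compl hs.measurableSet
    · have he : s.domRestrict (s.indicator f) = s.domRestrict f :=
        funext fun x => Set.indicator_of_mem x.2 f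
      rw [he]
      exact (ContinuousOn.restrict hf).stronglyMeasurable
    · have he : sᶜ.domRestrict (s.indicator f) = fun _ => 0 :=
        funext fun x => Set.indicator_of_notMem x.2 f
      rw [he]
      exact stronglyMeasurable_const
  exact h.measurable

lemma sk_update_insertNth {n : ℕ} (i : Fin (n + 1)) (s t : ℝ) (y : Fin n → ℝ) :
    Function.update (i.insertNth (α := fun _ => ℝ) s y) i t = i.insertNth t y := by
  refine funext (Fin.succAboveCases i ?_ ?_)
  · rw [Function.update_self, Fin.insertNth_apply_same]
  · intro j
    rw [Function.update_of_ne (Fin.succAbove_ne i j), Fin.insertNth_apply_succAbove,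
      Fin.insertNth_apply_succAbove]

lemma sk_insertNth_cont {n : ℕ} (i : Fin (n + 1)) (y : Fin n → ℝ) :
    Continuous (fun x : ℝ => i.insertNth (α := fun _ => ℝ) x y) := by
  refine continuous_pi (Fin.succAboveCases i ?_ ?_)
  · simpa only [Fin.insertNth_apply_same] using continuous_id'
  · intro j
    simpa only [Fin.insertNth_apply_succAbove] using continuous_const

lemma sk_insertNth_hasDerivAt {n : ℕ} (i : Fin (n + 1)) (y : Fin n → ℝ) (x : ℝ) :
    HasDerivAt (fun x : ℝ => i.insertNth (α := fun _ => ℝ) x y) (Pi.single i 1) x := by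
  have heq : (fun x : ℝ => i.insertNth (α := fun _ => ℝ) x y)
      = fun x : ℝ => x • (Pi.single i 1 : Fin (n+1) → ℝ) + i.insertNth 0 y := by
    refine funext fun x => funext (Fin.succAboveCases i ?_ ?_)
    · simp [Fin.insertNth_apply_same, Pi.single_eq_same]
    · intro j
      simp [Fin.insertNth_apply_succAbove, Pi.single_eq_of_ne (Fin.succAbove_ne i j)]
  rw [heq]
  simpa using ((hasDerivAt_id x).smul_const (Pi.single i 1 : Fin (n+1) → ℝ)).add_const
    (i.insertNth 0 y)


/-- Sobol'–Kucherenko DGSM bound on the unit cube: `S̄ᵢ ≤ vᵢ/(π²σ²)`. -/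
theorem stmt_12 {d : ℕ} (f : (Fin d → ℝ) → ℝ)
    (μ : Measure (Fin d → ℝ))
    (hμ : μ = Measure.pi fun _ : Fin d => volume.restrict (Set.Ioo (0:ℝ) 1))
    (hsmooth : ContDiffOn ℝ 1 f (Set.univ.pi fun _ : Fin d => Set.Ioo (0:ℝ) 1))
    (hgrad : ∀ j : Fin d, MemLp (fun z => fderiv ℝ f z (Pi.single j 1)) 2 μ)
    (σ2 : ℝ)
    (hσ : σ2 = (∫ z, (f z)^2 ∂μ) - (∫ z, f z ∂μ)^2)
    (hσpos : 0 < σ2)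
    (i : Fin d) (vi : ℝ)
    (hv : vi = ∫ z, (fderiv ℝ f z (Pi.single i 1))^2 ∂μ) :
    (1 / (2 * σ2)) * ∫ z, (∫ t in Set.Ioo (0:ℝ) 1, (f z - f (Function.update z i t))^2) ∂μ
      ≤ vi / (π^2 * σ2) := by
  obtain ⟨n, rfl⟩ : ∃ n, d = n + 1 := ⟨d - 1, (Nat.succ_pred_eq_of_pos i.pos).symm⟩
  have hπ := Real.pi_pos
  have hvi0 : 0 ≤ vi := hv ▸ integral_nonneg fun z => sq_nonneg _
  -- reduce to the key estimate
  suffices hL : (∫ z, (∫ t in Set.Ioo (0:ℝ) 1, (f z - f (Function.update z i t))^2) ∂μ)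
      ≤ 2 * vi / π^2 by
    have h1 : (0:ℝ) ≤ 1 / (2 * σ2) := by positivity
    calc (1 / (2 * σ2)) * ∫ z, (∫ t in Set.Ioo (0:ℝ) 1, (f z - f (Function.update z i t))^2) ∂μ
        ≤ (1 / (2 * σ2)) * (2 * vi / π^2) := mul_le_mul_of_nonneg_left hL h1
      _ = vi / (π^2 * σ2) := by field_simp
  -- notation
  set ν : Measure ℝ := volume.restrict (Set.Ioo (0:ℝ) 1) with hν
  haveI : IsProbabilityMeasure ν := ⟨by simp [hν]⟩
  set U : Set (Fin (n+1) → ℝ) := Set.univ.pi fun _ => Set.Ioo (0:ℝ) 1 with hU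
  have hUopen : IsOpen U := isOpen_set_pi Set.finite_univ fun a _ => isOpen_Ioo
  have hUmeas : MeasurableSet U := hUopen.measurableSet
  set F : (Fin (n+1) → ℝ) → ℝ := U.indicator f with hF
  have hFm : Measurable F := sk_indicator_meas hUopen hsmooth.continuousOn
  set Df : (Fin (n+1) → ℝ) → ℝ := fun z => fderiv ℝ f z (Pi.single i 1) with hDf
  have hDfc : ContinuousOn Df U :=
    (hsmooth.continuousOn_fderiv_of_isOpen hUopen le_rfl).clm_apply continuousOn_const
  set D' : (Fin (n+1) → ℝ) → ℝ := U.indicator Df with hD'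
  have hD'm : Measurable D' := sk_indicator_meas hUopen hDfc
  have hμU : μ U = 1 := by
    rw [hμ, hU, Measure.pi_pi]
    simp [hν]
  have hUae : ∀ᵐ z ∂μ, z ∈ U := by
    haveI : IsProbabilityMeasure μ := by rw [hμ]; infer_instance
    rw [ae_iff]
    have : {z | ¬ z ∈ U} = Uᶜ := rfl
    rw [this, measure_compl hUmeas (by simp), hμU]
    simp
  -- membership facts
  have hmemU : ∀ (x : ℝ) (y : Fin n → ℝ), x ∈ Set.Ioo (0:ℝ) 1 →
      (∀ j, y j ∈ Set.Ioo (0:ℝ) 1) → (i.insertNth (α := fun _ => ℝ) x y) ∈ U := by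
    intro x y hx hy
    rw [hU]
    intro j _
    refine Fin.succAboveCases i ?_ ?_ j
    · rwa [Fin.insertNth_apply_same]
    · intro k; rw [Fin.insertNth_apply_succAbove]; exact hy k
  have hmemU' : ∀ z ∈ U, ∀ t ∈ Set.Ioo (0:ℝ) 1, Function.update z i t ∈ U := by
    intro z hz t ht j _
    rcases eq_or_ne j i with rfl | hj
    · rwa [Function.update_self]
    · rw [Function.update_of_ne hj]; exact hz j (Set.mem_univ j)
  -- inner integrals
  set I0 : (Fin (n+1) → ℝ) → ℝ :=
    fun z => ∫ t in Set.Ioo (0:ℝ) 1, (f z - f (Function.update z i t))^2 with hI0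
  set IF : (Fin (n+1) → ℝ) → ℝ :=
    fun z => ∫ t, (F z - F (Function.update z i t))^2 ∂ν with hIF
  set Ihat : (Fin (n+1) → ℝ) → ℝ≥0∞ :=
    fun z => ∫⁻ t, ENNReal.ofReal ((F z - F (Function.update z i t))^2) ∂ν with hIhat
  have hupdate_meas : Measurable fun p : (Fin (n+1) → ℝ) × ℝ => Function.update p.1 i p.2 := by
    refine measurable_pi_lambda _ fun j => ?_
    rcases eq_or_ne j i with rfl | hj
    · simpa only [Function.update_self] using measurable_snd
    · simpa only [Function.update_of_ne hj, Function.comp_def] using (measurable_pi_apply j).comp measurable_fst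
  have h_inner_eq : ∀ z ∈ U, I0 z = IF z := by
    intro z hz
    rw [hI0, hIF]
    dsimp only
    refine setIntegral_congr_fun measurableSet_Ioo fun t ht => ?_
    rw [hF, Set.indicator_of_mem hz, Set.indicator_of_mem (hmemU' z hz t ht)]
  have hIF_sm : StronglyMeasurable IF := by
    have hQ : Measurable fun p : (Fin (n+1) → ℝ) × ℝ =>
        (F p.1 - F (Function.update p.1 i p.2))^2 :=
      ((hFm.comp measurable_fst).sub (hFm.comp hupdate_meas)).pow_const 2
    exact hQ.stronglyMeasurable.integral_prod_right'
  have hL_eq : (∫ z, I0 z ∂μ) = (∫⁻ z, ENNReal.ofReal (I0 z) ∂μ).toReal := by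
    apply integral_eq_lintegral_of_nonneg_ae
    · exact Filter.Eventually.of_forall fun z => integral_nonneg fun t => sq_nonneg _
    · exact hIF_sm.aestronglyMeasurable.congr (hUae.mono fun z hz => (h_inner_eq z hz).symm)
  have h2 : (∫⁻ z, ENNReal.ofReal (I0 z) ∂μ) ≤ ∫⁻ z, Ihat z ∂μ := by
    apply lintegral_mono_ae
    filter_upwards [hUae] with z hz
    rw [h_inner_eq z hz]
    have heq : IF z = (Ihat z).toReal := by
      apply integral_eq_lintegral_of_nonneg_ae
      · exact Filter.Eventually.of_forall fun t => sq_nonneg _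
      · exact ((measurable_const.sub (hFm.comp (measurable_update z))).pow_const
          2).aestronglyMeasurable
    rw [heq]
    exact ENNReal.ofReal_toReal_le
  -- transfer to the product structure
  set μn : Measure (Fin n → ℝ) := Measure.pi fun _ => ν with hμn
  set e := MeasurableEquiv.piFinSuccAbove (fun _ : Fin (n+1) => ℝ) i with he
  have hmp : MeasurePreserving e μ (ν.prod μn) := by
    rw [hμ, hμn]; exact measurePreserving_piFinSuccAbove (fun _ => ν) i
  have hesymm : ∀ p : ℝ × (Fin n → ℝ), e.symm p = i.insertNth p.1 p.2 := by
    intro p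
    rw [he, MeasurableEquiv.piFinSuccAbove_symm_apply]
    rfl
  have hins : Measurable fun p : ℝ × (Fin n → ℝ) => (i.insertNth (α := fun _ => ℝ) p.1 p.2) := by
    have hfe : (fun p : ℝ × (Fin n → ℝ) => (i.insertNth (α := fun _ => ℝ) p.1 p.2)) = ⇑e.symm :=
      funext fun p => (hesymm p).symm
    rw [hfe]; exact e.symm.measurable
  have hIhat_symm : ∀ p : ℝ × (Fin n → ℝ), Ihat (e.symm p)
      = ∫⁻ t, ENNReal.ofReal ((F (i.insertNth p.1 p.2) - F (i.insertNth t p.2))^2) ∂ν := by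
    intro p
    rw [hesymm p, hIhat]
    dsimp only
    refine lintegral_congr fun t => ?_
    rw [sk_update_insertNth]
  have hQm : Measurable fun q : (ℝ × (Fin n → ℝ)) × ℝ =>
      ENNReal.ofReal ((F (i.insertNth q.1.1 q.1.2) - F (i.insertNth q.2 q.1.2))^2) := by
    apply Measurable.ennreal_ofReal
    apply Measurable.pow_const
    exact ((hFm.comp (hins.comp (measurable_fst.comp measurable_fst |>.prodMk
        (measurable_snd.comp measurable_fst)))).sub
      (hFm.comp (hins.comp (measurable_snd.prodMk (measurable_snd.comp measurable_fst)))))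
  have hIhat_comp_meas : Measurable fun p : ℝ × (Fin n → ℝ) => Ihat (e.symm p) := by
    simp_rw [hIhat_symm]
    exact Measurable.lintegral_prod_right
      (f := fun (p : ℝ × (Fin n → ℝ)) t =>
        ENNReal.ofReal ((F (i.insertNth p.1 p.2) - F (i.insertNth t p.2))^2)) hQm
  have htransfer : (∫⁻ z, Ihat z ∂μ) = ∫⁻ p, Ihat (e.symm p) ∂(ν.prod μn) := by
    rw [← hmp.lintegral_comp hIhat_comp_meas]
    refine lintegral_congr fun z => ?_
    rw [MeasurableEquiv.symm_apply_apply]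
  have hiter : (∫⁻ p, Ihat (e.symm p) ∂(ν.prod μn))
      = ∫⁻ y, ∫⁻ s, Ihat (e.symm (s, y)) ∂ν ∂μn := by
    rw [lintegral_prod _ hIhat_comp_meas.aemeasurable]
    exact lintegral_lintegral_swap hIhat_comp_meas.aemeasurable
  have hyae : ∀ᵐ y ∂μn, ∀ j, y j ∈ Set.Ioo (0:ℝ) 1 := by
    haveI : IsProbabilityMeasure μn := by rw [hμn]; infer_instance
    have hS : MeasurableSet (Set.univ.pi fun _ : Fin n => Set.Ioo (0:ℝ) 1) :=
      MeasurableSet.univ_pi fun _ => measurableSet_Ioo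
    rw [ae_iff]
    have hseteq : {y : Fin n → ℝ | ¬ ∀ j, y j ∈ Set.Ioo (0:ℝ) 1}
        = (Set.univ.pi fun _ : Fin n => Set.Ioo (0:ℝ) 1)ᶜ := by
      ext y; simp [Set.mem_pi]
    rw [hseteq, measure_compl hS (by simp), hμn, Measure.pi_pi]
    simp [hν]
  have hbound : ∀ᵐ y ∂μn, (∫⁻ s, Ihat (e.symm (s, y)) ∂ν)
      ≤ ENNReal.ofReal (2 / π^2) * ∫⁻ x, ENNReal.ofReal (D' (i.insertNth x y) ^2) ∂ν := by
    filter_upwards [hyae] with y hy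
    have hg'm : Measurable fun x : ℝ => D' (i.insertNth (α := fun _ => ℝ) x y) :=
      hD'm.comp (hins.comp (measurable_id.prodMk measurable_const))
    have hgderiv : ∀ x ∈ Set.Ioo (0:ℝ) 1,
        HasDerivAt (fun x => F (i.insertNth x y)) (D' (i.insertNth x y)) x := by
      intro x hx
      have hzU : (i.insertNth (α := fun _ => ℝ) x y) ∈ U := hmemU x y hx hy
      have hdiff : DifferentiableAt ℝ f (i.insertNth x y) :=
        (hsmooth.differentiableOn one_ne_zero).differentiableAt (hUopen.mem_nhds hzU)
      have hcomp := hdiff.hasFDerivAt.comp_hasDerivAt x (sk_insertNth_hasDerivAt i y x)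
      have heqv : (fun x => F (i.insertNth x y)) =ᶠ[nhds x] (f ∘ fun x => i.insertNth x y) := by
        refine Filter.eventuallyEq_of_mem (isOpen_Ioo.mem_nhds hx) fun x' hx' => ?_
        rw [hF]
        exact Set.indicator_of_mem (hmemU x' y hx' hy) f
      have hder := hcomp.congr_of_eventuallyEq heqv
      rw [hD', Set.indicator_of_mem hzU, hDf]
      exact hder
    have hgcont : ContinuousOn (fun x => D' (i.insertNth x y)) (Set.Ioo (0:ℝ) 1) := by
      have h1 : ContinuousOn (fun x => Df (i.insertNth x y)) (Set.Ioo (0:ℝ) 1) :=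
        hDfc.comp (sk_insertNth_cont i y).continuousOn fun x hx => hmemU x y hx hy
      exact h1.congr fun x hx => by rw [hD', Set.indicator_of_mem (hmemU x y hx hy)]
    have h1d := oneDim hg'm hgderiv hgcont
    have hmatch : (∫⁻ s, Ihat (e.symm (s, y)) ∂ν)
        = ∫⁻ s, ∫⁻ t, ENNReal.ofReal ((F (i.insertNth s y) - F (i.insertNth t y))^2) ∂ν ∂ν :=
      lintegral_congr fun s => hIhat_symm (s, y)
    rw [hmatch]
    exact h1d
  have hDQ : Measurable fun p : ℝ × (Fin n → ℝ) =>
      ENNReal.ofReal (D' (i.insertNth p.1 p.2)^2) :=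
    ((hD'm.comp hins).pow_const 2).ennreal_ofReal
  have hfinal : (∫⁻ y, ∫⁻ s, Ihat (e.symm (s, y)) ∂ν ∂μn)
      ≤ ENNReal.ofReal (2 / π^2) * ∫⁻ z, ENNReal.ofReal (D' z ^2) ∂μ := by
    refine (lintegral_mono_ae hbound).trans (le_of_eq ?_)
    rw [lintegral_const_mul' _ _ ENNReal.ofReal_ne_top]
    congr 1
    calc (∫⁻ y, ∫⁻ x, ENNReal.ofReal (D' (i.insertNth x y)^2) ∂ν ∂μn)
        = ∫⁻ x, ∫⁻ y, ENNReal.ofReal (D' (i.insertNth x y)^2) ∂μn ∂ν :=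
          (lintegral_lintegral_swap hDQ.aemeasurable).symm
      _ = ∫⁻ p, ENNReal.ofReal (D' (i.insertNth p.1 p.2)^2) ∂(ν.prod μn) :=
          (lintegral_prod _ hDQ.aemeasurable).symm
      _ = ∫⁻ z, ENNReal.ofReal (D' z^2) ∂μ := by
          rw [← hmp.lintegral_comp hDQ]
          refine lintegral_congr fun z => ?_
          have hzz : (i.insertNth (α := fun _ => ℝ) (e z).1 (e z).2) = z := by
            rw [← hesymm (e z), MeasurableEquiv.symm_apply_apply]
          rw [hzz]
  have hE : (∫⁻ z, ENNReal.ofReal (D' z ^2) ∂μ) = ENNReal.ofReal vi := by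
    have hcongr : (∫⁻ z, ENNReal.ofReal (D' z ^2) ∂μ) = ∫⁻ z, ENNReal.ofReal (Df z ^2) ∂μ := by
      refine lintegral_congr_ae (hUae.mono fun z hz => ?_)
      have hzz : D' z = Df z := by rw [hD']; exact Set.indicator_of_mem hz Df
      dsimp only
      rw [hzz]
    rw [hcongr, ← ofReal_integral_eq_lintegral_ofReal ((hgrad i).integrable_sq)
      (Filter.Eventually.of_forall fun z => sq_nonneg _), hv]
  rw [hL_eq]
  apply ENNReal.toReal_le_of_le_ofReal (div_nonneg (by linarith) (by positivity))
  calc (∫⁻ z, ENNReal.ofReal (I0 z) ∂μ) ≤ ∫⁻ z, Ihat z ∂μ := h2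
    _ = ∫⁻ y, ∫⁻ s, Ihat (e.symm (s, y)) ∂ν ∂μn := by rw [htransfer, hiter]
    _ ≤ ENNReal.ofReal (2 / π^2) * ∫⁻ z, ENNReal.ofReal (D' z ^2) ∂μ := hfinal
    _ = ENNReal.ofReal (2 * vi / π^2) := by
        rw [hE, ← ENNReal.ofReal_mul (by positivity)]
        congr 1
        ring
end
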